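/- arXiv:2007.08274 — 4 statements merged into one kernel-verified Lean document; each statement's English description precedes it below -/
import Mathlib

section
/- Let (D_i)_{i≥1} be independent identically distributed ℕ-valued random variables whose common probability mass function d(k) := P(D_1 = k) satisfies: d(k) > 0 for all sufficiently large k; d(n−1)/d(n) → 1 as n → ∞; and (1/d(n)) ∑_{k=0}^{n} d(k) d(n−k) → 2 as n → ∞ (i.e., the probability generating function of D_1 is subexponential with radius of convergence 1). Fix an integer p ≥ 2 and set S_p := D_1 + ⋯ + D_p and M_p := max{D_1, …, D_p}. Then, conditional on S_p = n, the maximum satisfies M_p = n + O_p(1) as n → ∞; precisely: for every ε > 0 there exist K ∈ ℕ and n_0 ∈ ℕ such that for all n ≥ n_0, P(S_p = n) > 0 and P(M_p ≤ n − K | S_p = n) ≤ ε. -/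
open scoped ENNReal NNReal BigOperators
open MeasureTheory Filter

private def pconv (d : ℕ → ℝ) : ℕ → ℕ → ℝ
  | 0, n => if n = 0 then 1 else 0
  | (j+1), n => ∑ k ∈ Finset.range (n+1), d k * pconv d j (n - k)

private lemma pconv_one (d : ℕ → ℝ) (n : ℕ) : pconv d 1 n = d n := by
  show (∑ k ∈ Finset.range (n+1), d k * pconv d 0 (n - k)) = d n
  rw [Finset.sum_eq_single n]
  · simp [pconv]
  · intro k hk hkn
    simp only [Finset.mem_range] at hk
    have : n - k ≠ 0 := by omega
    simp [pconv, this]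
  · simp

private lemma pconv_nonneg (d : ℕ → ℝ) (hd0 : ∀ k, 0 ≤ d k) (j n : ℕ) : 0 ≤ pconv d j n := by
  induction j generalizing n with
  | zero => simp only [pconv]; positivity
  | succ j ih => exact Finset.sum_nonneg fun k _ => mul_nonneg (hd0 k) (ih _)

private lemma pconv_hasSum (d : ℕ → ℝ) (hd0 : ∀ k, 0 ≤ d k) (hdsum : HasSum d 1) (j : ℕ) :
    HasSum (pconv d (j+1)) 1 := by
  induction j with
  | zero => exact hdsum.congr_fun fun n => pconv_one d n
  | succ j ih =>
    have hdn : Summable (fun k => ‖d k‖) := by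
      refine hdsum.summable.congr fun k => ?_
      rw [Real.norm_eq_abs, abs_of_nonneg (hd0 k)]
    have hgn : Summable (fun k => ‖pconv d (j+1) k‖) := by
      refine ih.summable.congr fun k => ?_
      rw [Real.norm_eq_abs, abs_of_nonneg (pconv_nonneg d hd0 _ _)]
    have := hasSum_sum_range_mul_of_summable_norm hdn hgn
    rw [hdsum.tsum_eq, ih.tsum_eq, one_mul] at this
    exact this

private lemma tendsto_of_approx {f : ℕ → ℝ} {L : ℝ}
    (h : ∀ δ : ℝ, 0 < δ → ∀ᶠ n in atTop, |f n - L| ≤ δ) :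
    Tendsto f atTop (nhds L) := by
  rw [Metric.tendsto_atTop]
  intro ε hε
  obtain ⟨N, hN⟩ := eventually_atTop.mp (h (ε/2) (by linarith))
  exact ⟨N, fun n hn => by rw [Real.dist_eq]; linarith [hN n hn]⟩

private lemma longtail (d : ℕ → ℝ) (K₀ : ℕ) (hpos : ∀ k, K₀ ≤ k → 0 < d k)
    (hratio : Tendsto (fun n => d (n - 1) / d n) atTop (nhds 1)) (j : ℕ) :
    Tendsto (fun n => d (n - j) / d n) atTop (nhds 1) := by
  induction j with
  | zero =>
    have he : (fun _ : ℕ => (1:ℝ)) =ᶠ[atTop] fun n => d (n - 0) / d n := by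
      filter_upwards [eventually_ge_atTop K₀] with n hn
      simp [div_self (hpos n hn).ne']
    exact Tendsto.congr' he tendsto_const_nhds
  | succ j ih =>
    have h1 : Tendsto (fun n => d (n - j - 1) / d (n - j)) atTop (nhds 1) :=
      hratio.comp (tendsto_atTop_atTop.mpr fun b => ⟨b + j, fun n hn => by omega⟩)
    have h2 := h1.mul ih
    rw [one_mul] at h2
    apply Tendsto.congr' _ h2
    filter_upwards [eventually_ge_atTop (K₀ + j)] with n hn
    have hdn : d (n - j) ≠ 0 := (hpos _ (by omega)).ne'
    have : n - (j+1) = n - j - 1 := by omega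
    rw [this, div_mul_div_cancel₀]
    exact hdn

private lemma conv_split (u v : ℕ → ℝ) (K n : ℕ) (hn : 2 * K ≤ n) :
    ∑ k ∈ Finset.range (n+1), u k * v (n - k)
      = (∑ k ∈ Finset.range K, u k * v (n - k))
        + (∑ k ∈ Finset.Icc K (n - K), u k * v (n - k))
        + (∑ j ∈ Finset.range K, u (n - j) * v j) := by
  have h1 : (∑ k ∈ Finset.Ico 0 K, u k * v (n - k))
      + (∑ k ∈ Finset.Ico K (n - K + 1), u k * v (n - k))
      = ∑ k ∈ Finset.Ico 0 (n - K + 1), u k * v (n - k) :=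
    Finset.sum_Ico_consecutive _ (by omega) (by omega)
  have h2 : (∑ k ∈ Finset.Ico 0 (n - K + 1), u k * v (n - k))
      + (∑ k ∈ Finset.Ico (n - K + 1) (n + 1), u k * v (n - k))
      = ∑ k ∈ Finset.Ico 0 (n + 1), u k * v (n - k) :=
    Finset.sum_Ico_consecutive _ (by omega) (by omega)
  have h3 : (∑ k ∈ Finset.Ico (n - K + 1) (n + 1), u k * v (n - k))
      = ∑ j ∈ Finset.range K, u (n - j) * v j := by
    refine Finset.sum_nbij' (fun k => n - k) (fun j => n - j) ?_ ?_ ?_ ?_ ?_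
    · intro k hk
      simp only [Finset.mem_Ico] at hk
      simp only [Finset.mem_range]
      omega
    · intro j hj
      simp only [Finset.mem_range] at hj
      simp only [Finset.mem_Ico]
      omega
    · intro k hk
      simp only [Finset.mem_Ico] at hk
      show n - (n - k) = k
      omega
    · intro j hj
      simp only [Finset.mem_range] at hj
      show n - (n - j) = j
      omega
    · intro k hk
      simp only [Finset.mem_Ico] at hk
      show u k * v (n - k) = u (n - (n - k)) * v (n - k)
      have h1 : n - (n - k) = k := by omega
      rw [h1]
  rw [Finset.range_eq_Ico, ← h2, ← h1, h3, Finset.Ico_add_one_right_eq_Icc, ← Finset.range_eq_Ico]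

private lemma middle_tendsto (d : ℕ → ℝ) (K₀ : ℕ) (hpos : ∀ k, K₀ ≤ k → 0 < d k)
    (hratio : Tendsto (fun n => d (n - 1) / d n) atTop (nhds 1))
    (hconv : Tendsto (fun n => (∑ k ∈ Finset.range (n + 1), d k * d (n - k)) / d n) atTop (nhds 2))
    (K : ℕ) :
    Tendsto (fun n => (∑ k ∈ Finset.Icc K (n - K), d k * d (n - k)) / d n) atTop
      (nhds (2 - 2 * ∑ k ∈ Finset.range K, d k)) := by
  have hlow : Tendsto (fun n => (∑ k ∈ Finset.range K, d k * d (n - k)) / d n) atTop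
      (nhds (∑ k ∈ Finset.range K, d k)) := by
    have heq : ∀ n, (∑ k ∈ Finset.range K, d k * d (n - k)) / d n
        = ∑ k ∈ Finset.range K, d k * (d (n - k) / d n) := by
      intro n; rw [Finset.sum_div]; exact Finset.sum_congr rfl fun k _ => mul_div_assoc _ _ _
    simp_rw [heq]
    have h := tendsto_finset_sum (Finset.range K)
      (fun k _ => (tendsto_const_nhds (x := d k)).mul (longtail d K₀ hpos hratio k))
    simpa using h
  have hhigh : Tendsto (fun n => (∑ j ∈ Finset.range K, d (n - j) * d j) / d n) atTop
      (nhds (∑ j ∈ Finset.range K, d j)) := by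
    have heq : ∀ n, (∑ j ∈ Finset.range K, d (n - j) * d j) / d n
        = ∑ j ∈ Finset.range K, d j * (d (n - j) / d n) := by
      intro n; rw [Finset.sum_div]
      exact Finset.sum_congr rfl fun k _ => by rw [mul_comm (d (n - k)), mul_div_assoc]
    simp_rw [heq]
    have h := tendsto_finset_sum (Finset.range K)
      (fun k _ => (tendsto_const_nhds (x := d k)).mul (longtail d K₀ hpos hratio k))
    simpa using h
  have h := (hconv.sub hlow).sub hhigh
  have heq : (fun n => (∑ k ∈ Finset.range (n+1), d k * d (n - k)) / d n
      - (∑ k ∈ Finset.range K, d k * d (n - k)) / d n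
      - (∑ j ∈ Finset.range K, d (n - j) * d j) / d n)
      =ᶠ[atTop] fun n => (∑ k ∈ Finset.Icc K (n - K), d k * d (n - k)) / d n := by
    filter_upwards [eventually_ge_atTop (2*K)] with n hn
    rw [conv_split d d K n hn]
    ring
  have h2 := Tendsto.congr' heq h
  have : (2:ℝ) - 2 * ∑ k ∈ Finset.range K, d k
      = 2 - (∑ k ∈ Finset.range K, d k) - (∑ k ∈ Finset.range K, d k) := by ring
  rw [this]
  exact h2

private lemma conv_tendsto (d g : ℕ → ℝ) (K₀ : ℕ) (hpos : ∀ k, K₀ ≤ k → 0 < d k)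
    (hd0 : ∀ k, 0 ≤ d k) (hg0 : ∀ k, 0 ≤ g k)
    (hdsum : HasSum d 1) (hgsum : HasSum g 1)
    (hratio : Tendsto (fun n => d (n - 1) / d n) atTop (nhds 1))
    (hconv : Tendsto (fun n => (∑ k ∈ Finset.range (n + 1), d k * d (n - k)) / d n) atTop (nhds 2))
    (c : ℝ) (hc : 0 ≤ c)
    (hg : Tendsto (fun n => g n / d n) atTop (nhds c)) :
    Tendsto (fun n => (∑ k ∈ Finset.range (n+1), d k * g (n - k)) / d n) atTop
      (nhds (c + 1)) := by
  have hterm : ∀ k : ℕ, Tendsto (fun n => g (n - k) / d n) atTop (nhds c) := by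
    intro k
    have h1 : Tendsto (fun n => g (n - k) / d (n - k)) atTop (nhds c) :=
      hg.comp (tendsto_atTop_atTop.mpr fun b => ⟨b + k, fun n hn => by omega⟩)
    have h2 := h1.mul (longtail d K₀ hpos hratio k)
    rw [mul_one] at h2
    apply Tendsto.congr' _ h2
    filter_upwards [eventually_ge_atTop (K₀ + k)] with n hn
    rw [div_mul_div_cancel₀]
    exact (hpos _ (by omega)).ne'
  apply tendsto_of_approx
  intro δ hδ
  have hc1 : (0:ℝ) < c + 1 := by linarith
  -- choose K
  have hsK : Tendsto (fun K => ∑ k ∈ Finset.range K, d k) atTop (nhds 1) :=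
    hdsum.tendsto_sum_nat
  have htK : Tendsto (fun K => ∑ k ∈ Finset.range K, g k) atTop (nhds 1) :=
    hgsum.tendsto_sum_nat
  have hE : Tendsto (fun K : ℕ => (c+1) * (2 - 2 * ∑ k ∈ Finset.range K, d k)
      + |c * (∑ k ∈ Finset.range K, d k) + (∑ k ∈ Finset.range K, g k) - (c + 1)|)
      atTop (nhds 0) := by
    have h1 := ((tendsto_const_nhds (x := (c+1:ℝ))).mul
        ((tendsto_const_nhds (x := (2:ℝ))).sub (hsK.const_mul 2))).add
      ((((hsK.const_mul c)).add htK).sub (tendsto_const_nhds (x := (c+1:ℝ)))).abs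
    have : (c+1) * (2 - 2 * 1) + |c * 1 + 1 - (c+1)| = 0 := by
      rw [show c * 1 + 1 - (c+1) = 0 by ring]
      simp
    rw [this] at h1
    exact h1
  have hgle : ∀ᶠ m in atTop, g m ≤ (c+1) * d m := by
    filter_upwards [hg.eventually (eventually_le_nhds (by linarith : c < c+1)),
      eventually_ge_atTop K₀] with m h1 h2
    have hdm := hpos m h2
    have : g m = (g m / d m) * d m := by field_simp
    rw [this]
    nlinarith [hdm.le]
  obtain ⟨K₁, hK₁⟩ := eventually_atTop.mp hgle
  obtain ⟨K, hKE, hK0, hK1⟩ :=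
    ((hE.eventually (eventually_le_nhds (by linarith : (0:ℝ) < δ/2))).and
      ((eventually_ge_atTop K₀).and (eventually_ge_atTop K₁))).exists
  set S := ∑ k ∈ Finset.range K, d k with hS
  set T := ∑ k ∈ Finset.range K, g k with hT
  -- limits in n for fixed K
  have hlow : Tendsto (fun n => (∑ k ∈ Finset.range K, d k * g (n - k)) / d n) atTop
      (nhds (c * S)) := by
    have heq : ∀ n, (∑ k ∈ Finset.range K, d k * g (n - k)) / d n
        = ∑ k ∈ Finset.range K, d k * (g (n - k) / d n) := by
      intro n; rw [Finset.sum_div]; exact Finset.sum_congr rfl fun k _ => mul_div_assoc _ _ _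
    simp_rw [heq]
    have h := tendsto_finset_sum (Finset.range K)
      (fun k _ => (tendsto_const_nhds (x := d k)).mul (hterm k))
    have : (∑ k ∈ Finset.range K, d k * c) = c * S := by
      rw [← Finset.sum_mul]; ring
    rwa [this] at h
  have hhigh : Tendsto (fun n => (∑ j ∈ Finset.range K, d (n - j) * g j) / d n) atTop
      (nhds T) := by
    have heq : ∀ n, (∑ j ∈ Finset.range K, d (n - j) * g j) / d n
        = ∑ j ∈ Finset.range K, g j * (d (n - j) / d n) := by
      intro n; rw [Finset.sum_div]
      exact Finset.sum_congr rfl fun k _ => by rw [mul_comm (d (n - k)), mul_div_assoc]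
    simp_rw [heq]
    have h := tendsto_finset_sum (Finset.range K)
      (fun k _ => (tendsto_const_nhds (x := g k)).mul (longtail d K₀ hpos hratio k))
    simpa using h
  have hlowhigh := hlow.add hhigh
  have hmidd := middle_tendsto d K₀ hpos hratio hconv K
  obtain ⟨N₁, hN₁⟩ := Metric.tendsto_atTop.mp hlowhigh (δ/4) (by linarith)
  obtain ⟨N₂, hN₂⟩ := Metric.tendsto_atTop.mp hmidd (δ/(4*(c+1))) (by positivity)
  filter_upwards [eventually_ge_atTop (2*K), eventually_ge_atTop K₀,
    eventually_ge_atTop N₁, eventually_ge_atTop N₂] with n hn2K hnK0 hnN1 hnN2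
  have hdn : 0 < d n := hpos n hnK0
  rw [conv_split d g K n hn2K]
  have hx := hN₁ n hnN1
  rw [Real.dist_eq] at hx
  have hy := hN₂ n hnN2
  rw [Real.dist_eq] at hy
  set low := (∑ k ∈ Finset.range K, d k * g (n - k)) / d n with hlowdef
  set high := (∑ j ∈ Finset.range K, d (n - j) * g j) / d n with hhighdef
  set mid := (∑ k ∈ Finset.Icc K (n - K), d k * g (n - k)) / d n with hmiddef
  set midd := (∑ k ∈ Finset.Icc K (n - K), d k * d (n - k)) / d n with hmidddef
  have hmid0 : 0 ≤ mid := by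
    apply div_nonneg _ hdn.le
    exact Finset.sum_nonneg fun k _ => mul_nonneg (hd0 k) (hg0 _)
  have hmidle : mid ≤ (c+1) * midd := by
    rw [hmiddef, hmidddef, ← mul_div_assoc]
    apply (div_le_div_iff_of_pos_right hdn).mpr
    rw [Finset.mul_sum]
    apply Finset.sum_le_sum
    intro k hk
    simp only [Finset.mem_Icc] at hk
    have hnk : K₁ ≤ n - k := by omega
    have hb := hK₁ _ hnk
    nlinarith [hd0 k]
  rw [add_div, add_div]
  have ht1 : |low + mid + high - (c+1)|
      ≤ |low + high - (c*S+T)| + |mid| + |c*S+T - (c+1)| := by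
    have e : low + mid + high - (c+1)
        = (low + high - (c*S+T)) + mid + (c*S+T - (c+1)) := by ring
    rw [e]
    exact (abs_add_le _ _).trans (add_le_add_left (abs_add_le _ _) _)
  rw [abs_of_nonneg hmid0] at ht1
  have hyy : midd ≤ (2 - 2*S) + δ/(4*(c+1)) := by
    rw [← hS] at hy
    have := (abs_lt.mp hy).2
    linarith
  have h5 : (c+1) * ((2 - 2*S) + δ/(4*(c+1))) = (c+1)*(2 - 2*S) + δ/4 := by
    field_simp
  have h6 : (c+1) * midd ≤ (c+1)*(2 - 2*S) + δ/4 := by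
    calc (c+1) * midd ≤ (c+1) * ((2 - 2*S) + δ/(4*(c+1))) :=
          mul_le_mul_of_nonneg_left hyy hc1.le
    _ = (c+1)*(2 - 2*S) + δ/4 := h5
  have h7 : (0:ℝ) ≤ |c*S+T - (c+1)| := abs_nonneg _
  linarith

private lemma pconv_tendsto (d : ℕ → ℝ) (K₀ : ℕ) (hpos : ∀ k, K₀ ≤ k → 0 < d k)
    (hd0 : ∀ k, 0 ≤ d k) (hdsum : HasSum d 1)
    (hratio : Tendsto (fun n => d (n - 1) / d n) atTop (nhds 1))
    (hconv : Tendsto (fun n => (∑ k ∈ Finset.range (n + 1), d k * d (n - k)) / d n) atTop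
      (nhds 2)) (j : ℕ) :
    Tendsto (fun n => pconv d (j+1) n / d n) atTop (nhds ((j:ℝ)+1)) := by
  induction j with
  | zero =>
    have he : (fun _ : ℕ => (1:ℝ)) =ᶠ[atTop] fun n => pconv d 1 n / d n := by
      filter_upwards [eventually_ge_atTop K₀] with n hn
      rw [pconv_one, div_self (hpos n hn).ne']
    simpa using Tendsto.congr' he tendsto_const_nhds
  | succ j ih =>
    have h := conv_tendsto d (pconv d (j+1)) K₀ hpos hd0 (pconv_nonneg d hd0 _)
      hdsum (pconv_hasSum d hd0 hdsum j) hratio hconv ((j:ℝ)+1) (by positivity) ih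
    have he : (fun n => (∑ k ∈ Finset.range (n+1), d k * pconv d (j+1) (n - k)) / d n)
        = fun n => pconv d (j+2) n / d n := rfl
    rw [he] at h
    convert h using 2
    push_cast
    ring

private lemma sum_pmf {Ω : Type*} [MeasurableSpace Ω] (μ : Measure Ω) [IsProbabilityMeasure μ]
    (D : ℕ → Ω → ℕ) (hmeas : ∀ i, Measurable (D i))
    (hindep : ProbabilityTheory.iIndepFun D μ)
    (hident : ∀ i, Measure.map (D i) μ = Measure.map (D 0) μ)
    (d : ℕ → ℝ) (hd : ∀ k, d k = (μ {ω | D 0 ω = k}).toReal)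
    (s : Finset ℕ) (n : ℕ) :
    (μ {ω | ∑ i ∈ s, D i ω = n}).toReal = pconv d s.card n := by
  have hsingle : ∀ i k, μ {ω | D i ω = k} = μ {ω | D 0 ω = k} := by
    intro i k
    have h1 : μ (D i ⁻¹' {k}) = μ (D 0 ⁻¹' {k}) := by
      rw [← Measure.map_apply (hmeas i) (measurableSet_singleton k),
        ← Measure.map_apply (hmeas 0) (measurableSet_singleton k), hident i]
    simpa [Set.preimage, Set.mem_singleton_iff] using h1
  induction s using Finset.induction generalizing n with
  | empty =>
    by_cases hn : n = 0
    · simp [hn, pconv]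
    · have he : {ω : Ω | 0 = n} = ∅ := by
        ext ω; simp only [Set.mem_setOf_eq, Set.mem_empty_iff_false, iff_false]
        omega
      simp [he, hn, pconv]
  | @insert a s ha ih =>
    have hSmeas : Measurable fun ω => ∑ i ∈ s, D i ω :=
      Finset.measurable_sum s (fun i _ => hmeas i)
    have hset : {ω | ∑ i ∈ insert a s, D i ω = n}
        = ⋃ k ∈ Finset.range (n+1), ({ω | D a ω = k} ∩ {ω | ∑ i ∈ s, D i ω = n - k}) := by
      ext ω
      simp only [Set.mem_setOf_eq, Finset.sum_insert ha, Set.mem_iUnion, Set.mem_inter_iff,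
        Finset.mem_range, exists_prop]
      constructor
      · intro h; exact ⟨D a ω, by omega, rfl, by omega⟩
      · rintro ⟨k, hk, h1, h2⟩; omega
    have hdisj : (↑(Finset.range (n+1)) : Set ℕ).PairwiseDisjoint
        (fun k => {ω | D a ω = k} ∩ {ω | ∑ i ∈ s, D i ω = n - k}) := by
      intro x _ y _ hxy
      refine Set.disjoint_left.mpr ?_
      rintro ω ⟨h1, _⟩ ⟨h2, _⟩
      exact hxy (h1 ▸ h2 ▸ rfl)
    have hmeasS : ∀ k ∈ Finset.range (n+1),
        MeasurableSet ({ω | D a ω = k} ∩ {ω | ∑ i ∈ s, D i ω = n - k}) := by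
      intro k _
      exact ((hmeas a) (measurableSet_singleton k)).inter (hSmeas (measurableSet_singleton _))
    have hindepS : ProbabilityTheory.IndepFun (D a) (∑ j ∈ s, D j) μ :=
      (hindep.indepFun_finset_sum_of_notMem hmeas ha).symm
    have hmul : ∀ k, μ ({ω | D a ω = k} ∩ {ω | ∑ i ∈ s, D i ω = n - k})
        = μ {ω | D a ω = k} * μ {ω | ∑ i ∈ s, D i ω = n - k} := by
      intro k
      have h1 := hindepS.measure_inter_preimage_eq_mul {k} {n - k}
        (measurableSet_singleton _) (measurableSet_singleton _)
      have e1 : (D a ⁻¹' {k}) = {ω | D a ω = k} := rfl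
      have e2 : ((∑ j ∈ s, D j) ⁻¹' {n - k}) = {ω | ∑ i ∈ s, D i ω = n - k} := by
        ext ω
        simp [Finset.sum_apply]
      rwa [e1, e2] at h1
    rw [hset, measure_biUnion_finset hdisj hmeasS]
    rw [ENNReal.toReal_sum (fun k _ => measure_ne_top μ _)]
    have hcard : (insert a s).card = s.card + 1 := Finset.card_insert_of_notMem ha
    rw [hcard]
    show _ = ∑ k ∈ Finset.range (n+1), d k * pconv d s.card (n - k)
    refine Finset.sum_congr rfl fun k _ => ?_
    rw [hmul k, ENNReal.toReal_mul, ih, hsingle a k, ← hd k]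

/-- Single big jump principle: for iid `ℕ`-valued random variables
`D_1, D_2, …` whose common pmf `d` satisfies the subexponentiality conditions
(`d` eventually positive, `d(n-1)/d(n) → 1`, `(1/d(n)) ∑_{k=0}^n d(k)d(n-k) → 2`),
and fixed `p ≥ 2`, conditionally on `S_p = n` the maximum `M_p` equals `n + O_p(1)`:
for every `ε > 0` there are `K, n₀` such that for all `n ≥ n₀`, `P(S_p = n) > 0` and
`P(M_p ≤ n - K ∣ S_p = n) ≤ ε`. -/
theorem statement4
    {Ω : Type*} [MeasurableSpace Ω] (μ : Measure Ω) [IsProbabilityMeasure μ]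
    (D : ℕ → Ω → ℕ)
    (hmeas : ∀ i, Measurable (D i))
    (hindep : ProbabilityTheory.iIndepFun D μ)
    (hident : ∀ i, Measure.map (D i) μ = Measure.map (D 0) μ)
    (d : ℕ → ℝ) (hd : ∀ k, d k = (μ {ω | D 0 ω = k}).toReal)
    (hpos : ∃ K, ∀ k, K ≤ k → 0 < d k)
    (hratio : Filter.Tendsto (fun n => d (n - 1) / d n) Filter.atTop (nhds 1))
    (hconv : Filter.Tendsto (fun n => (∑ k ∈ Finset.range (n + 1), d k * d (n - k)) / d n)
      Filter.atTop (nhds 2))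
    (p : ℕ) (hp : 2 ≤ p) :
    ∀ ε : ℝ, 0 < ε → ∃ K n₀ : ℕ, ∀ n : ℕ, n₀ ≤ n →
      0 < μ {ω | ∑ i ∈ Finset.range p, D i ω = n} ∧
      (μ ({ω | (Finset.range p).sup (fun i => D i ω) ≤ n - K} ∩
            {ω | ∑ i ∈ Finset.range p, D i ω = n})).toReal /
        (μ {ω | ∑ i ∈ Finset.range p, D i ω = n}).toReal ≤ ε := by
  intro ε hε
  obtain ⟨K₀, hpos0⟩ := hpos
  have hd0 : ∀ k, 0 ≤ d k := fun k => (hd k) ▸ ENNReal.toReal_nonneg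
  have hsingle : ∀ i k, (μ {ω | D i ω = k}).toReal = d k := by
    intro i k
    have h1 : μ (D i ⁻¹' {k}) = μ (D 0 ⁻¹' {k}) := by
      rw [← Measure.map_apply (hmeas i) (measurableSet_singleton k),
        ← Measure.map_apply (hmeas 0) (measurableSet_singleton k), hident i]
    have h2 : μ {ω | D i ω = k} = μ {ω | D 0 ω = k} := by
      simpa [Set.preimage, Set.mem_singleton_iff] using h1
    rw [h2, ← hd k]
  have hdsum : HasSum d 1 := by
    have hdisj : Pairwise (Function.onFun Disjoint fun k => {ω | D 0 ω = k}) := by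
      intro x y hxy
      refine Set.disjoint_left.mpr ?_
      intro ω h1 h2
      exact hxy (h1 ▸ h2 ▸ rfl)
    have hmeasA : ∀ k, MeasurableSet {ω | D 0 ω = k} :=
      fun k => (hmeas 0) (measurableSet_singleton k)
    have hU : (⋃ k, {ω | D 0 ω = k}) = Set.univ := by
      ext ω; simp
    have h1 : ∑' k, μ {ω | D 0 ω = k} = 1 := by
      rw [← measure_iUnion hdisj hmeasA, hU, measure_univ]
    have h3 : ∑' k, (μ {ω | D 0 ω = k}).toReal = 1 := by
      rw [← ENNReal.tsum_toReal_eq (fun k => measure_ne_top μ _), h1]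
      simp
    have h2 := ENNReal.hasSum_toReal (f := fun k => μ {ω | D 0 ω = k})
      (by rw [h1]; exact ENNReal.one_ne_top)
    rw [h3] at h2
    exact h2.congr_fun hd
  have hPS : ∀ n, (μ {ω | ∑ i ∈ Finset.range p, D i ω = n}).toReal = pconv d p n := by
    intro n
    have h := sum_pmf μ D hmeas hindep hident d hd (Finset.range p) n
    rwa [Finset.card_range] at h
  have hp1 : Tendsto (fun n => pconv d p n / d n) atTop (nhds p) := by
    have h := pconv_tendsto d K₀ hpos0 hd0 hdsum hratio hconv (p-1)
    have hpe : p - 1 + 1 = p := by omega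
    rw [hpe] at h
    have hc : ((p-1:ℕ):ℝ) + 1 = (p:ℝ) := by
      have h1 : (1:ℕ) ≤ p := by omega
      push_cast [h1]
      ring
    rwa [hc] at h
  have hp2 : Tendsto (fun n => pconv d (p-1) n / d n) atTop (nhds ((p:ℝ)-1)) := by
    have h := pconv_tendsto d K₀ hpos0 hd0 hdsum hratio hconv (p-2)
    have hpe : p - 2 + 1 = p - 1 := by omega
    rw [hpe] at h
    have hc : ((p-2:ℕ):ℝ) + 1 = (p:ℝ) - 1 := by
      have h1 : (2:ℕ) ≤ p := hp
      push_cast [h1]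
      ring
    rwa [hc] at h
  have hpR : (0:ℝ) < p := by exact_mod_cast (by omega : 0 < p)
  have hpR2 : (2:ℝ) ≤ p := by exact_mod_cast hp
  -- eventually pconv d (p-1) m ≤ p * d m
  have hgle : ∀ᶠ m in atTop, pconv d (p-1) m ≤ (p:ℝ) * d m := by
    filter_upwards [hp2.eventually (eventually_le_nhds (by linarith : (p:ℝ)-1 < p)),
      eventually_ge_atTop K₀] with m h1 h2
    have hdm := hpos0 m h2
    have he : pconv d (p-1) m = (pconv d (p-1) m / d m) * d m := by field_simp
    rw [he]
    nlinarith [hdm.le]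
  obtain ⟨M₁, hM₁⟩ := eventually_atTop.mp hgle
  -- choose K
  have hsK : Tendsto (fun K => ∑ k ∈ Finset.range K, d k) atTop (nhds 1) :=
    hdsum.tendsto_sum_nat
  have hKlim : Tendsto (fun K : ℕ => (p:ℝ)^2 * (2 - 2 * ∑ k ∈ Finset.range K, d k))
      atTop (nhds 0) := by
    have h := ((tendsto_const_nhds (x := (2:ℝ))).sub (hsK.const_mul 2)).const_mul ((p:ℝ)^2)
    have he : (p:ℝ)^2 * (2 - 2*1) = 0 := by ring
    rwa [he] at h
  obtain ⟨K, hKE, hKK0, hKM1⟩ :=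
    ((hKlim.eventually (eventually_le_nhds (by linarith : (0:ℝ) < ε/2))).and
      ((eventually_ge_atTop K₀).and (eventually_ge_atTop M₁))).exists
  set sK : ℝ := ∑ k ∈ Finset.range K, d k with hsKdef
  have hmidd := middle_tendsto d K₀ hpos0 hratio hconv K
  have hεp : (0:ℝ) < ε / (2 * (p:ℝ)^2) := by positivity
  obtain ⟨N₂, hN₂⟩ := Metric.tendsto_atTop.mp hmidd (ε / (2 * (p:ℝ)^2)) hεp
  obtain ⟨N₁, hN₁⟩ := eventually_atTop.mp
    (hp1.eventually (eventually_ge_nhds (by linarith : (1:ℝ) < p)))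
  have hfin : ∀ᶠ n in atTop, 0 < μ {ω | ∑ i ∈ Finset.range p, D i ω = n} ∧
      (μ ({ω | (Finset.range p).sup (fun i => D i ω) ≤ n - K} ∩
            {ω | ∑ i ∈ Finset.range p, D i ω = n})).toReal /
        (μ {ω | ∑ i ∈ Finset.range p, D i ω = n}).toReal ≤ ε := by
    filter_upwards [eventually_ge_atTop (p*K), eventually_ge_atTop K₀,
      eventually_ge_atTop N₁, eventually_ge_atTop N₂] with n hnpK hnK0 hnN1 hnN2
    have hn2K : 2*K ≤ n := le_trans (Nat.mul_le_mul_right K hp) hnpK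
    have hdn : 0 < d n := hpos0 n hnK0
    have hr1 : (1:ℝ) ≤ pconv d p n / d n := hN₁ n hnN1
    have hPSn : d n ≤ pconv d p n := (one_le_div hdn).mp hr1
    have hPpos : 0 < pconv d p n := lt_of_lt_of_le hdn hPSn
    constructor
    · rw [pos_iff_ne_zero]
      intro h0
      have h := hPS n
      rw [h0, ENNReal.toReal_zero] at h
      linarith
    · -- the ratio bound
      set A : ℕ → Set Ω := fun i =>
        ({ω | K ≤ D i ω ∧ D i ω ≤ n - K} ∩ {ω | ∑ j ∈ Finset.range p, D j ω = n}) with hAdef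
      have hsub : {ω | (Finset.range p).sup (fun i => D i ω) ≤ n - K} ∩
          {ω | ∑ i ∈ Finset.range p, D i ω = n} ⊆ ⋃ i ∈ Finset.range p, A i := by
        rintro ω ⟨hM, hS⟩
        simp only [Set.mem_setOf_eq] at hM hS
        obtain ⟨i, hi, hieq⟩ := Finset.exists_mem_eq_sup (Finset.range p)
          ⟨0, Finset.mem_range.mpr (by omega)⟩ (fun i => D i ω)
        have hle : n ≤ p * D i ω := by
          have h1 : ∑ j ∈ Finset.range p, D j ω ≤ (Finset.range p).card • D i ω :=
            Finset.sum_le_card_nsmul _ _ _ (fun j hj => by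
              rw [← hieq]; exact Finset.le_sup (f := fun i => D i ω) hj)
          rw [Finset.card_range, smul_eq_mul, hS] at h1
          exact h1
        refine Set.mem_biUnion hi ⟨⟨?_, ?_⟩, hS⟩
        · exact Nat.le_of_mul_le_mul_left (le_trans hnpK hle) (by omega)
        · exact hieq ▸ hM
      have hAi : ∀ i ∈ Finset.range p, (μ (A i)).toReal
          = ∑ k ∈ Finset.Icc K (n-K), d k * pconv d (p-1) (n - k) := by
        intro i hi
        have hSmeas : Measurable fun ω => ∑ j ∈ (Finset.range p).erase i, D j ω :=
          Finset.measurable_sum _ fun j _ => hmeas j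
        have hsum : ∀ ω, D i ω + ∑ j ∈ (Finset.range p).erase i, D j ω
            = ∑ j ∈ Finset.range p, D j ω :=
          fun ω => Finset.add_sum_erase (Finset.range p) (fun j => D j ω) hi
        have hset : A i = ⋃ k ∈ Finset.Icc K (n-K),
            ({ω | D i ω = k} ∩ {ω | ∑ j ∈ (Finset.range p).erase i, D j ω = n - k}) := by
          ext ω
          simp only [hAdef, Set.mem_setOf_eq, Set.mem_iUnion, Set.mem_inter_iff,
            Finset.mem_Icc, exists_prop]
          constructor
          · rintro ⟨⟨h1, h2⟩, h3⟩
            exact ⟨D i ω, ⟨h1, h2⟩, rfl, by have := hsum ω; omega⟩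
          · rintro ⟨k, ⟨hk1, hk2⟩, h1, h2⟩
            have := hsum ω
            refine ⟨⟨by omega, by omega⟩, by omega⟩
        have hdisj : (↑(Finset.Icc K (n-K)) : Set ℕ).PairwiseDisjoint
            (fun k => {ω | D i ω = k} ∩
              {ω | ∑ j ∈ (Finset.range p).erase i, D j ω = n - k}) := by
          intro x _ y _ hxy
          refine Set.disjoint_left.mpr ?_
          rintro ω ⟨h1, _⟩ ⟨h2, _⟩
          exact hxy (h1 ▸ h2 ▸ rfl)
        have hmeasSets : ∀ k ∈ Finset.Icc K (n-K), MeasurableSet ({ω | D i ω = k} ∩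
            {ω | ∑ j ∈ (Finset.range p).erase i, D j ω = n - k}) :=
          fun k _ => ((hmeas i) (measurableSet_singleton k)).inter
            (hSmeas (measurableSet_singleton _))
        have hindepS : ProbabilityTheory.IndepFun (D i)
            (∑ j ∈ (Finset.range p).erase i, D j) μ :=
          (hindep.indepFun_finset_sum_of_notMem hmeas (Finset.notMem_erase i _)).symm
        have hrest : ∀ m, (μ {ω | ∑ j ∈ (Finset.range p).erase i, D j ω = m}).toReal
            = pconv d (p-1) m := by
          intro m
          have h := sum_pmf μ D hmeas hindep hident d hd ((Finset.range p).erase i) m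
          rwa [Finset.card_erase_of_mem hi, Finset.card_range] at h
        rw [hset, measure_biUnion_finset hdisj hmeasSets,
          ENNReal.toReal_sum (fun k _ => measure_ne_top μ _)]
        refine Finset.sum_congr rfl fun k hk => ?_
        have hmul : μ ({ω | D i ω = k} ∩
            {ω | ∑ j ∈ (Finset.range p).erase i, D j ω = n - k})
            = μ {ω | D i ω = k} * μ {ω | ∑ j ∈ (Finset.range p).erase i, D j ω = n - k} := by
          have h1 := hindepS.measure_inter_preimage_eq_mul {k} {n - k}
            (measurableSet_singleton _) (measurableSet_singleton _)
          have e2 : ((∑ j ∈ (Finset.range p).erase i, D j) ⁻¹' {n - k})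
              = {ω | ∑ j ∈ (Finset.range p).erase i, D j ω = n - k} := by
            ext ω
            simp [Finset.sum_apply]
          rwa [e2] at h1
        rw [hmul, ENNReal.toReal_mul, hsingle i k, hrest]
      -- numerator bound
      set T : ℝ := ∑ k ∈ Finset.Icc K (n-K), d k * pconv d (p-1) (n - k) with hTdef
      have hT0 : 0 ≤ T :=
        Finset.sum_nonneg fun k _ => mul_nonneg (hd0 k) (pconv_nonneg d hd0 _ _)
      set midsum : ℝ := ∑ k ∈ Finset.Icc K (n-K), d k * d (n - k) with hmidsumdef
      have hmid0 : 0 ≤ midsum :=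
        Finset.sum_nonneg fun k _ => mul_nonneg (hd0 k) (hd0 _)
      have hTle : T ≤ (p:ℝ) * midsum := by
        rw [hTdef, hmidsumdef, Finset.mul_sum]
        apply Finset.sum_le_sum
        intro k hk
        simp only [Finset.mem_Icc] at hk
        have hnk : M₁ ≤ n - k := by omega
        have hb := hM₁ _ hnk
        nlinarith [hd0 k]
      have hnum : (μ ({ω | (Finset.range p).sup (fun i => D i ω) ≤ n - K} ∩
            {ω | ∑ i ∈ Finset.range p, D i ω = n})).toReal ≤ (p:ℝ)^2 * midsum := by
        have h1 : μ ({ω | (Finset.range p).sup (fun i => D i ω) ≤ n - K} ∩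
            {ω | ∑ i ∈ Finset.range p, D i ω = n}) ≤ ∑ i ∈ Finset.range p, μ (A i) :=
          le_trans (measure_mono hsub) (measure_biUnion_finset_le _ _)
        have h2 : (∑ i ∈ Finset.range p, μ (A i)) ≠ ⊤ :=
          (ENNReal.sum_lt_top.mpr fun i _ => measure_lt_top μ _).ne
        have h3 := ENNReal.toReal_mono h2 h1
        rw [ENNReal.toReal_sum (fun i _ => measure_ne_top μ _)] at h3
        calc (μ ({ω | (Finset.range p).sup (fun i => D i ω) ≤ n - K} ∩
            {ω | ∑ i ∈ Finset.range p, D i ω = n})).toReal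
            ≤ ∑ i ∈ Finset.range p, (μ (A i)).toReal := h3
          _ = ∑ _i ∈ Finset.range p, T := Finset.sum_congr rfl hAi
          _ = (p:ℝ) * T := by rw [Finset.sum_const, Finset.card_range, nsmul_eq_mul]
          _ ≤ (p:ℝ) * ((p:ℝ) * midsum) := by nlinarith
          _ = (p:ℝ)^2 * midsum := by ring
      -- ratio bound
      have hmb : midsum / d n ≤ (2 - 2*sK) + ε / (2 * (p:ℝ)^2) := by
        have h := hN₂ n hnN2
        rw [Real.dist_eq] at h
        have h2 := (abs_lt.mp h).2
        rw [← hsKdef] at h2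
        rw [hmidsumdef]
        linarith
      have hratio2 : (μ ({ω | (Finset.range p).sup (fun i => D i ω) ≤ n - K} ∩
            {ω | ∑ i ∈ Finset.range p, D i ω = n})).toReal /
          (μ {ω | ∑ i ∈ Finset.range p, D i ω = n}).toReal
          ≤ ((p:ℝ)^2 * midsum) / d n := by
        rw [hPS n]
        exact div_le_div₀ (by positivity) hnum hdn hPSn
      have hfinal : ((p:ℝ)^2 * midsum) / d n ≤ ε := by
        have he : ((p:ℝ)^2 * midsum) / d n = (p:ℝ)^2 * (midsum / d n) := by ring
        rw [he]
        have h1 : (p:ℝ)^2 * (midsum / d n) ≤ (p:ℝ)^2 * ((2 - 2*sK) + ε / (2 * (p:ℝ)^2)) :=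
          mul_le_mul_of_nonneg_left hmb (by positivity)
        have h2 : (p:ℝ)^2 * ((2 - 2*sK) + ε / (2 * (p:ℝ)^2))
            = (p:ℝ)^2 * (2 - 2*sK) + ε/2 := by
          field_simp
        linarith
      linarith
  obtain ⟨n₀, hn₀⟩ := eventually_atTop.mp hfin
  exact ⟨K, n₀, hn₀⟩
end

section
/- Let (c_k)_{k≥1} be nonnegative real numbers with c_0 := 0, and suppose the power series C(x) = ∑_{k≥1} c_k x^k has radius of convergence ρ with 0 < ρ < 1 and C(ρ) = ∑_{k≥1} c_k ρ^k < ∞. Define g_n := [x^n] exp( ∑_{j≥1} (1/j) ∑_{k≥1} c_k x^{jk} ), the n-th coefficient of the formal exponential (well defined since the argument has zero constant term); all g_n are nonnegative. Then: (a) the series ∑_{j≥1} C(ρ^j)/j converges; (b) ∑_{n≥0} g_n ρ^n converges; and (c) for every r > ρ the series ∑_{n≥0} g_n r^n diverges. In other words, the power series G(x) = ∑_n g_n x^n has radius of convergence ρ and G(ρ) < ∞. -/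
open scoped ENNReal NNReal BigOperators
open Filter

/-- `Ct c z = ∑_{k≥1} c_k z^k` (the `k = 0` term vanishes since `c 0 = 0`). -/
noncomputable def Ct (c : ℕ → ℝ) (z : ℝ) : ℝ := ∑' k : ℕ, c k * z ^ k

/-- The one-variable series `H(x) = ∑_{j≥1} (1/j) ∑_{k≥1} c_k x^{jk}`; its coefficient of
`x^a` is `∑_{j ∣ a, j ≥ 1, a/j ≥ 1} c_{a/j} / j = ∑_{j ∈ divisors a} c_{a/j} / j`. -/
noncomputable def sH (c : ℕ → ℝ) : PowerSeries ℝ :=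
  PowerSeries.mk fun a => ∑ j ∈ a.divisors, c (a / j) / (j : ℝ)

/-- `gone c n = [x^n] exp(H(x))`, via the formal exponential: `∑_{p=0}^n (1/p!) [x^n] H^p`. -/
noncomputable def gone (c : ℕ → ℝ) (n : ℕ) : ℝ :=
  ∑ p ∈ Finset.range (n + 1), (1 / (Nat.factorial p) : ℝ) *
    PowerSeries.coeff (R := ℝ) n ((sH c) ^ p)

/-- Injection comparison for sums of nonnegative reals. -/
lemma sum_le_sum_inj {ι κ : Type*} (s : Finset ι) (t : Finset κ) (e : ι → κ)
    (he : Set.InjOn e s) (hm : ∀ i ∈ s, e i ∈ t)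
    (f : ι → ℝ) (g : κ → ℝ) (hg : ∀ j ∈ t, 0 ≤ g j)
    (hfg : ∀ i ∈ s, f i = g (e i)) :
    ∑ i ∈ s, f i ≤ ∑ j ∈ t, g j := by
  classical
  calc ∑ i ∈ s, f i = ∑ i ∈ s, g (e i) := Finset.sum_congr rfl hfg
    _ = ∑ j ∈ s.image e, g j := (Finset.sum_image (fun a ha b hb h => he ha hb h)).symm
    _ ≤ ∑ j ∈ t, g j := Finset.sum_le_sum_of_subset_of_nonneg
        (Finset.image_subset_iff.2 hm) (fun j hj _ => hg j hj)

/-- Cauchy partial-sum bound: for power series with nonnegative coefficients. -/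
lemma cauchy_bound (f g : PowerSeries ℝ) (ρ : ℝ) (hρ : 0 ≤ ρ)
    (hf : ∀ n, 0 ≤ PowerSeries.coeff (R := ℝ) n f) (hg : ∀ n, 0 ≤ PowerSeries.coeff (R := ℝ) n g)
    (A B : ℝ)
    (hA : ∀ N, ∑ n ∈ Finset.range N, PowerSeries.coeff (R := ℝ) n f * ρ ^ n ≤ A)
    (hB : ∀ N, ∑ n ∈ Finset.range N, PowerSeries.coeff (R := ℝ) n g * ρ ^ n ≤ B) :
    ∀ N, ∑ n ∈ Finset.range N, PowerSeries.coeff (R := ℝ) n (f * g) * ρ ^ n ≤ A * B := by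
  intro N
  have hA0 : 0 ≤ A := le_trans (by simp) (hA 0)
  have hB0 : 0 ≤ B := le_trans (by simp) (hB 0)
  have key : ∑ n ∈ Finset.range N, PowerSeries.coeff (R := ℝ) n (f * g) * ρ ^ n ≤
      (∑ i ∈ Finset.range N, PowerSeries.coeff (R := ℝ) i f * ρ ^ i) *
      (∑ j ∈ Finset.range N, PowerSeries.coeff (R := ℝ) j g * ρ ^ j) := by
    rw [Finset.sum_mul_sum]
    have : ∀ n ∈ Finset.range N, PowerSeries.coeff (R := ℝ) n (f * g) * ρ ^ n =
        ∑ ij ∈ Finset.HasAntidiagonal.antidiagonal n,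
          (PowerSeries.coeff (R := ℝ) ij.1 f * ρ ^ ij.1) * (PowerSeries.coeff (R := ℝ) ij.2 g * ρ ^ ij.2) := by
      intro n _
      rw [PowerSeries.coeff_mul, Finset.sum_mul]
      refine Finset.sum_congr rfl fun ij hij => ?_
      have : ij.1 + ij.2 = n := Finset.HasAntidiagonal.mem_antidiagonal.1 hij
      rw [← this, pow_add]; ring
    rw [Finset.sum_congr rfl this, Finset.sum_sigma', ← Finset.sum_product']
    refine sum_le_sum_inj _ _ (fun x : (Σ _ : ℕ, ℕ × ℕ) => x.2) ?_ ?_ _ _ ?_ ?_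
    · rintro ⟨n, i, j⟩ h ⟨n', i', j'⟩ h' hh
      simp only [Finset.mem_sigma, Finset.mem_coe, Finset.mem_antidiagonal] at h h'
      simp only [Prod.mk.injEq] at hh
      have h1 := h.2; have h2 := h'.2
      simp only [Finset.HasAntidiagonal.mem_antidiagonal] at h1 h2
      obtain ⟨e1, e2⟩ := hh
      have : n = n' := by omega
      subst this; simp_all
    · rintro ⟨n, i, j⟩ h
      simp only [Finset.mem_sigma, Finset.mem_range, Finset.HasAntidiagonal.mem_antidiagonal] at h
      simp only [Finset.mem_product, Finset.mem_range]
      omega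
    · rintro ⟨i, j⟩ _
      exact mul_nonneg (mul_nonneg (hf i) (pow_nonneg hρ i))
        (mul_nonneg (hg j) (pow_nonneg hρ j))
    · rintro ⟨n, i, j⟩ _; rfl
  refine key.trans ?_
  exact mul_le_mul (hA N) (hB N)
    (Finset.sum_nonneg fun j _ => mul_nonneg (hg j) (pow_nonneg hρ j)) hA0

lemma pow_coeff_bound (f : PowerSeries ℝ) (ρ : ℝ) (hρ : 0 ≤ ρ)
    (hf : ∀ n, 0 ≤ PowerSeries.coeff (R := ℝ) n f) (B : ℝ) (hB1 : 1 ≤ max B 1)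
    (hB : ∀ N, ∑ n ∈ Finset.range N, PowerSeries.coeff (R := ℝ) n f * ρ ^ n ≤ B) :
    ∀ p, (∀ n, 0 ≤ PowerSeries.coeff (R := ℝ) n (f ^ p)) ∧
      (∀ N, ∑ n ∈ Finset.range N, PowerSeries.coeff (R := ℝ) n (f ^ p) * ρ ^ n ≤ (max B 1) ^ p) := by
  intro p
  induction p with
  | zero =>
    constructor
    · intro n; rw [pow_zero, PowerSeries.coeff_one]; positivity
    · intro N
      rw [pow_zero]
      have : ∑ n ∈ Finset.range N, PowerSeries.coeff (R := ℝ) n (1 : PowerSeries ℝ) * ρ ^ n ≤ 1 := by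
        rcases Nat.eq_zero_or_pos N with h | h
        · simp [h]
        · rw [show N = (N - 1) + 1 by omega]
          rw [Finset.sum_range_succ']
          simp only [PowerSeries.coeff_one]
          have : ∑ i ∈ Finset.range (N - 1),
              (if i + 1 = 0 then (1:ℝ) else 0) * ρ ^ (i + 1) = 0 := by
            apply Finset.sum_eq_zero; intro i _; simp
          simp [this]
      simpa using this
  | succ p ih =>
    have hBm : ∀ N, ∑ n ∈ Finset.range N, PowerSeries.coeff (R := ℝ) n f * ρ ^ n ≤ max B 1 :=
      fun N => (hB N).trans (le_max_left _ _)
    constructor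
    · intro n
      rw [pow_succ, PowerSeries.coeff_mul]
      exact Finset.sum_nonneg fun ij _ => mul_nonneg (ih.1 ij.1) (hf ij.2)
    · intro N
      rw [pow_succ]
      exact (cauchy_bound (f ^ p) f ρ hρ ih.1 hf _ _ ih.2 hBm N).trans (le_of_eq rfl)

/-- If `C(x) = ∑ c_k x^k` has nonnegative coefficients, radius of convergence
`ρ ∈ (0,1)` and `C(ρ) < ∞`, then with `g_n = [x^n] exp(∑_{j≥1} C(x^j)/j)`:
(a) `∑_{j≥1} C(ρ^j)/j` converges; (b) `∑ g_n ρ^n` converges; (c) `∑ g_n r^n` diverges for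
every `r > ρ`. I.e. `G(x)` has radius of convergence `ρ` and `G(ρ) < ∞`. -/
theorem statement5
    (c : ℕ → ℝ) (hcnn : ∀ k, 0 ≤ c k) (hc0 : c 0 = 0)
    (ρ : ℝ) (hρ0 : 0 < ρ) (hρ1 : ρ < 1)
    (hsum : Summable (fun k => c k * ρ ^ k))
    (hdiv : ∀ r : ℝ, ρ < r → ¬ Summable (fun k => c k * r ^ k)) :
    Summable (fun j : ℕ => Ct c (ρ ^ (j + 1)) / (j + 1)) ∧
    Summable (fun n : ℕ => gone c n * ρ ^ n) ∧
    ∀ r : ℝ, ρ < r → ¬ Summable (fun n : ℕ => gone c n * r ^ n) := by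
  classical
  set S : ℝ := ∑' k, c k * ρ ^ k with hS
  have hS0 : 0 ≤ S := tsum_nonneg fun k => mul_nonneg (hcnn k) (pow_nonneg hρ0.le k)
  have hterm_nn : ∀ k, 0 ≤ c k * ρ ^ k := fun k => mul_nonneg (hcnn k) (pow_nonneg hρ0.le k)
  -- coefficients of sH
  have hHcoeff : ∀ n, PowerSeries.coeff (R := ℝ) n (sH c) = ∑ j ∈ n.divisors, c (n / j) / (j : ℝ) := by
    intro n; simp [sH, PowerSeries.coeff_mk]
  have hHnn : ∀ n, 0 ≤ PowerSeries.coeff (R := ℝ) n (sH c) := by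
    intro n; rw [hHcoeff]
    exact Finset.sum_nonneg fun j _ => div_nonneg (hcnn _) (Nat.cast_nonneg j)
  -- part (a)
  have ha : Summable (fun j : ℕ => Ct c (ρ ^ (j + 1)) / (j + 1)) := by
    have hzsum : ∀ j : ℕ, Summable (fun k => c k * (ρ ^ (j + 1)) ^ k) := by
      intro j
      refine Summable.of_nonneg_of_le
        (fun k => mul_nonneg (hcnn k) (pow_nonneg (by positivity) k))
        (fun k => ?_) hsum
      have : (ρ ^ (j + 1)) ^ k ≤ ρ ^ k := by
        rw [← pow_mul]
        exact pow_le_pow_of_le_one hρ0.le hρ1.le (by nlinarith [Nat.le_mul_of_pos_left k (Nat.succ_pos j)])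
      exact mul_le_mul_of_nonneg_left this (hcnn k)
    have hbound : ∀ j : ℕ, Ct c (ρ ^ (j + 1)) ≤ ρ ^ j * S := by
      intro j
      have h1 : ∀ k, c k * (ρ ^ (j + 1)) ^ k ≤ ρ ^ j * (c k * ρ ^ k) := by
        intro k
        rcases Nat.eq_zero_or_pos k with hk | hk
        · simp [hk, hc0]
        · have : (ρ ^ (j + 1)) ^ k = ρ ^ (j * k) * ρ ^ k := by
            rw [← pow_add, ← pow_mul]; ring_nf
          rw [this]
          have h2 : ρ ^ (j * k) ≤ ρ ^ j :=
            pow_le_pow_of_le_one hρ0.le hρ1.le (Nat.le_mul_of_pos_right j hk)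
          calc c k * (ρ ^ (j * k) * ρ ^ k) = ρ ^ (j * k) * (c k * ρ ^ k) := by ring
            _ ≤ ρ ^ j * (c k * ρ ^ k) :=
              mul_le_mul_of_nonneg_right h2 (hterm_nn k)
      calc Ct c (ρ ^ (j + 1)) = ∑' k, c k * (ρ ^ (j + 1)) ^ k := rfl
        _ ≤ ∑' k, ρ ^ j * (c k * ρ ^ k) := Summable.tsum_le_tsum h1 (hzsum j) (hsum.mul_left _)
        _ = ρ ^ j * S := by rw [tsum_mul_left]
    refine Summable.of_nonneg_of_le
      (fun j => div_nonneg (tsum_nonneg fun k => mul_nonneg (hcnn k) (by positivity)) (by positivity))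
      (fun j => ?_)
      (((summable_geometric_of_lt_one hρ0.le hρ1).mul_right S))
    have hCt0 : 0 ≤ Ct c (ρ ^ (j + 1)) :=
      tsum_nonneg fun k => mul_nonneg (hcnn k) (by positivity)
    calc Ct c (ρ ^ (j + 1)) / (j + 1) ≤ Ct c (ρ ^ (j + 1)) := by
          apply div_le_self hCt0
          push_cast; linarith [Nat.cast_nonneg (α := ℝ) j]
      _ ≤ ρ ^ j * S := hbound j
  -- partial sum bound for `sH` at `ρ`
  have hgeo : ∑' n : ℕ, ρ ^ n = (1 - ρ)⁻¹ := tsum_geometric_of_lt_one hρ0.le hρ1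
  set B : ℝ := (1 - ρ)⁻¹ * S with hBdef
  have hHsum : ∀ N, ∑ n ∈ Finset.range N, PowerSeries.coeff (R := ℝ) n (sH c) * ρ ^ n ≤ B := by
    intro N
    have step1 : ∑ n ∈ Finset.range N, PowerSeries.coeff (R := ℝ) n (sH c) * ρ ^ n
        = ∑ n ∈ Finset.range N, ∑ j ∈ n.divisors, (c (n / j) / j) * ρ ^ n := by
      refine Finset.sum_congr rfl fun n _ => ?_
      rw [hHcoeff, Finset.sum_mul]
    rw [step1, Finset.sum_sigma']
    have step2 : ∑ x ∈ (Finset.range N).sigma Nat.divisors, (c (x.1 / x.2) / (x.2 : ℝ)) * ρ ^ x.1 ≤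
        ∑ jk ∈ (Finset.Icc 1 N) ×ˢ (Finset.Icc 1 N), (c jk.2 / (jk.1 : ℝ)) * ρ ^ (jk.1 * jk.2) := by
      refine sum_le_sum_inj _ _ (fun x : (Σ _ : ℕ, ℕ) => (x.2, x.1 / x.2)) ?_ ?_ _ _ ?_ ?_
      · rintro ⟨n, j⟩ h ⟨n', j'⟩ h' hh
        simp only [Finset.mem_coe, Finset.mem_sigma, Finset.mem_range, Nat.mem_divisors] at h h'
        simp only [Prod.mk.injEq] at hh
        obtain ⟨hj, hj'⟩ := hh
        subst hj
        obtain ⟨m, hm⟩ := h.2.1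
        obtain ⟨m', hm'⟩ := h'.2.1
        have hjpos : 0 < j := Nat.pos_of_dvd_of_pos h.2.1 (Nat.pos_of_ne_zero h.2.2)
        have e1 : n / j = m := by rw [hm]; exact Nat.mul_div_cancel_left m hjpos
        have e2 : n' / j = m' := by rw [hm']; exact Nat.mul_div_cancel_left m' hjpos
        have : m = m' := by rw [← e1, ← e2]; exact hj'
        simp [hm, hm', this]
      · rintro ⟨n, j⟩ h
        simp only [Finset.mem_sigma, Finset.mem_range, Nat.mem_divisors] at h
        obtain ⟨hn, hdvd, hn0⟩ := h
        have hjpos : 0 < j := Nat.pos_of_dvd_of_pos hdvd (Nat.pos_of_ne_zero hn0)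
        have hjle : j ≤ n := Nat.le_of_dvd (Nat.pos_of_ne_zero hn0) hdvd
        have hq : 0 < n / j := Nat.div_pos hjle hjpos
        have hqle : n / j ≤ n := Nat.div_le_self n j
        simp only [Finset.mem_product, Finset.mem_Icc]
        omega
      · rintro ⟨j, k⟩ _
        exact mul_nonneg (div_nonneg (hcnn k) (Nat.cast_nonneg j)) (pow_nonneg hρ0.le _)
      · rintro ⟨n, j⟩ h
        simp only [Finset.mem_sigma, Finset.mem_range, Nat.mem_divisors] at h
        have : j * (n / j) = n := Nat.mul_div_cancel' h.2.1
        simp [this]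
    refine step2.trans ?_
    have step3 : ∑ jk ∈ (Finset.Icc 1 N) ×ˢ (Finset.Icc 1 N),
        (c jk.2 / (jk.1 : ℝ)) * ρ ^ (jk.1 * jk.2) ≤
        ∑ jk ∈ (Finset.Icc 1 N) ×ˢ (Finset.Icc 1 N),
        ρ ^ (jk.1 - 1) * (c jk.2 * ρ ^ jk.2) := by
      refine Finset.sum_le_sum ?_
      rintro ⟨j, k⟩ hjk
      simp only [Finset.mem_product, Finset.mem_Icc] at hjk
      obtain ⟨⟨hj1, _⟩, ⟨hk1, _⟩⟩ := hjk
      have h1 : c k / (j : ℝ) ≤ c k := by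
        apply div_le_self (hcnn k)
        exact_mod_cast hj1
      have h2 : ρ ^ (j * k) ≤ ρ ^ ((j - 1) + k) := by
        apply pow_le_pow_of_le_one hρ0.le hρ1.le
        obtain ⟨a, rfl⟩ : ∃ a, j = a + 1 := ⟨j - 1, by omega⟩
        obtain ⟨b, rfl⟩ : ∃ b, k = b + 1 := ⟨k - 1, by omega⟩
        have : (a + 1) * (b + 1) = a * b + a + b + 1 := by ring
        omega
      calc (c k / (j : ℝ)) * ρ ^ (j * k) ≤ c k * ρ ^ ((j - 1) + k) := by
            apply mul_le_mul h1 h2 (pow_nonneg hρ0.le _) (hcnn k)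
        _ = ρ ^ (j - 1) * (c k * ρ ^ k) := by rw [pow_add]; ring
    refine step3.trans ?_
    rw [Finset.sum_product]
    have step4 : ∑ j ∈ Finset.Icc 1 N, ∑ k ∈ Finset.Icc 1 N,
        ρ ^ (j - 1) * (c k * ρ ^ k)
        = (∑ j ∈ Finset.Icc 1 N, ρ ^ (j - 1)) * (∑ k ∈ Finset.Icc 1 N, c k * ρ ^ k) := by
      rw [Finset.sum_mul_sum]
    rw [step4]
    have f1 : ∑ j ∈ Finset.Icc 1 N, ρ ^ (j - 1) ≤ (1 - ρ)⁻¹ := by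
      have h1 : ∑ j ∈ Finset.Icc 1 N, ρ ^ (j - 1) ≤ ∑ i ∈ Finset.range N, ρ ^ i := by
        refine sum_le_sum_inj _ _ (fun j => j - 1) ?_ ?_ _ _ ?_ ?_
        · intro a ha b hb hab
          simp only [Finset.coe_Icc, Set.mem_Icc] at ha hb
          simp only at hab
          omega
        · intro j hj
          simp only [Finset.mem_Icc] at hj
          simp only [Finset.mem_range]
          omega
        · intro i _; exact pow_nonneg hρ0.le i
        · intro j _; rfl
      refine h1.trans ?_
      rw [← hgeo]
      exact Summable.sum_le_tsum _ (fun i _ => pow_nonneg hρ0.le i)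
        (summable_geometric_of_lt_one hρ0.le hρ1)
    have f2 : ∑ k ∈ Finset.Icc 1 N, c k * ρ ^ k ≤ S :=
      Summable.sum_le_tsum _ (fun k _ => hterm_nn k) hsum
    rw [hBdef]
    apply mul_le_mul f1 f2 (Finset.sum_nonneg fun k _ => hterm_nn k)
      (inv_nonneg.2 (by linarith))
  -- power bounds
  have hp := pow_coeff_bound (sH c) ρ hρ0.le hHnn B (le_max_right _ _) hHsum
  set M : ℝ := max B 1 with hM
  have hM0 : 0 ≤ M := le_trans zero_le_one (le_max_right _ _)
  have hgnn : ∀ n, 0 ≤ gone c n := by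
    intro n
    refine Finset.sum_nonneg fun p _ => mul_nonneg (by positivity) ((hp p).1 n)
  -- part (b)
  have hb : Summable (fun n : ℕ => gone c n * ρ ^ n) := by
    refine summable_of_sum_range_le
      (fun n => mul_nonneg (hgnn n) (pow_nonneg hρ0.le n)) (fun N => ?_ : ∀ N,
        ∑ n ∈ Finset.range N, gone c n * ρ ^ n ≤ Real.exp M)
    calc ∑ n ∈ Finset.range N, gone c n * ρ ^ n
        = ∑ n ∈ Finset.range N, ∑ p ∈ Finset.range (n + 1),
            (1 / (Nat.factorial p) : ℝ) * PowerSeries.coeff (R := ℝ) n ((sH c) ^ p) * ρ ^ n := by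
          refine Finset.sum_congr rfl fun n _ => ?_
          rw [gone, Finset.sum_mul]
      _ ≤ ∑ n ∈ Finset.range N, ∑ p ∈ Finset.range N,
            (1 / (Nat.factorial p) : ℝ) * PowerSeries.coeff (R := ℝ) n ((sH c) ^ p) * ρ ^ n := by
          refine Finset.sum_le_sum fun n hn => ?_
          refine Finset.sum_le_sum_of_subset_of_nonneg ?_ fun p _ _ => ?_
          · apply Finset.range_subset_range.2
            simp only [Finset.mem_range] at hn
            omega
          · exact mul_nonneg (mul_nonneg (by positivity) ((hp p).1 n)) (pow_nonneg hρ0.le n)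
      _ = ∑ p ∈ Finset.range N, (1 / (Nat.factorial p) : ℝ) *
            ∑ n ∈ Finset.range N, PowerSeries.coeff (R := ℝ) n ((sH c) ^ p) * ρ ^ n := by
          rw [Finset.sum_comm]
          refine Finset.sum_congr rfl fun p _ => ?_
          rw [Finset.mul_sum]
          refine Finset.sum_congr rfl fun n _ => by ring
      _ ≤ ∑ p ∈ Finset.range N, (1 / (Nat.factorial p) : ℝ) * M ^ p := by
          refine Finset.sum_le_sum fun p _ => ?_
          exact mul_le_mul_of_nonneg_left ((hp p).2 N) (by positivity)
      _ = ∑ p ∈ Finset.range N, M ^ p / (Nat.factorial p) := by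
          refine Finset.sum_congr rfl fun p _ => by ring
      _ ≤ Real.exp M := Real.sum_le_exp_of_nonneg hM0 N
  -- part (c)
  have hge : ∀ n, c n ≤ gone c n := by
    intro n
    rcases Nat.eq_zero_or_pos n with h0 | h0
    · subst h0
      rw [hc0, gone]
      refine Finset.sum_nonneg fun p _ => mul_nonneg (by positivity) ((hp p).1 0)
    · have h1 : c n ≤ PowerSeries.coeff (R := ℝ) n (sH c) := by
        rw [hHcoeff]
        have hmem : 1 ∈ n.divisors := Nat.one_mem_divisors.2 (by omega)
        have := Finset.single_le_sum
          (f := fun j => c (n / j) / (j : ℝ))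
          (fun j _ => div_nonneg (hcnn _) (Nat.cast_nonneg j)) hmem
        simpa using this
      have h2 : (1 / (Nat.factorial 1) : ℝ) * PowerSeries.coeff (R := ℝ) n ((sH c) ^ 1) ≤ gone c n := by
        rw [gone]
        refine Finset.single_le_sum
          (f := fun p => (1 / (Nat.factorial p) : ℝ) * PowerSeries.coeff (R := ℝ) n ((sH c) ^ p))
          (fun p _ => mul_nonneg (by positivity) ((hp p).1 n)) ?_
        simp only [Finset.mem_range]; omega
      refine h1.trans ?_
      refine le_trans (le_of_eq ?_) h2
      simp [Nat.factorial]
  have hc : ∀ r : ℝ, ρ < r → ¬ Summable (fun n : ℕ => gone c n * r ^ n) := by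
    intro r hr hsm
    apply hdiv r hr
    have hr0 : 0 ≤ r := le_trans hρ0.le hr.le
    refine Summable.of_nonneg_of_le
      (fun n => mul_nonneg (hcnn n) (pow_nonneg hr0 n))
      (fun n => mul_le_mul_of_nonneg_right (hge n) (pow_nonneg hr0 n)) hsm
  exact ⟨ha, hb, hc⟩
end

section
/- Let (c_k)_{k≥1} be nonnegative real numbers, not identically zero, with c_0 := 0, let m := min{k : c_k > 0}, let ρ ∈ (0,1) with C(ρ) := ∑_{k≥1} c_k ρ^k < ∞, and write C(z) := ∑_{k≥1} c_k z^k. Then the series ∑_{j≥1} (C(ρ^j) − c_m ρ^{jm})/(j ρ^{jm}) converges, the infinite product ∏_{k>m} (1 − ρ^{k−m})^{c_k} converges (i.e., the partial products ∏_{m<k≤S} (1 − ρ^{k−m})^{c_k} converge as S → ∞ to a positive limit), and ∏_{k>m} (1 − ρ^{k−m})^{c_k} = exp( − ∑_{j≥1} (C(ρ^j) − c_m ρ^{jm})/(j ρ^{jm}) ). -/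
open scoped ENNReal NNReal BigOperators
open Filter

set_option maxHeartbeats 1600000

/-- The series `∑_{j≥1} (C(ρ^j) - c_m ρ^{jm})/(j ρ^{jm})` converges, and the
infinite product `∏_{k>m} (1 - ρ^{k-m})^{c_k}` converges (as the limit of the partial
products `∏_{m<k≤S}` as `S → ∞`) to `exp(-∑_{j≥1} (C(ρ^j) - c_m ρ^{jm})/(j ρ^{jm}))`
(a positive limit). -/
theorem statement16
    (c : ℕ → ℝ) (hcnn : ∀ k, 0 ≤ c k) (hc0 : c 0 = 0) (hne : ∃ k, 0 < c k)
    (m : ℕ) (hm : m = sInf {k | 0 < c k})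
    (ρ : ℝ) (hρ0 : 0 < ρ) (hρ1 : ρ < 1)
    (hsum : Summable (fun k => c k * ρ ^ k)) :
    Summable (fun j : ℕ =>
      (Ct c (ρ ^ (j + 1)) - c m * ρ ^ ((j + 1) * m)) / ((j + 1) * ρ ^ ((j + 1) * m))) ∧
    Filter.Tendsto (fun S : ℕ => ∏ k ∈ Finset.Ioc m S, (1 - ρ ^ (k - m)) ^ (c k))
      Filter.atTop
      (nhds (Real.exp (-(∑' j : ℕ,
        (Ct c (ρ ^ (j + 1)) - c m * ρ ^ ((j + 1) * m)) / ((j + 1) * ρ ^ ((j + 1) * m)))))) := by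
  classical
  set term : ℕ → ℝ := fun j : ℕ =>
      (Ct c (ρ ^ (j + 1)) - c m * ρ ^ ((j + 1) * m)) / ((j + 1) * ρ ^ ((j + 1) * m))
    with hterm_def
  have hρm : ∀ n : ℕ, (0:ℝ) < ρ ^ n := fun n => pow_pos hρ0 n
  have hρle1 : ρ ≤ 1 := le_of_lt hρ1
  have hml : ∀ k, k < m → c k = 0 := by
    intro k hk
    by_contra h
    have hpos : 0 < c k := lt_of_le_of_ne (hcnn k) (Ne.symm h)
    have hle : sInf {k | 0 < c k} ≤ k := Nat.sInf_le hpos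
    rw [hm] at hk; omega
  set g : ℕ → ℝ := fun k => c (k + (m + 1)) with hg_def
  have hgnn : ∀ k, 0 ≤ g k := fun k => hcnn _
  have hshift : Summable (fun k => c (k + (m + 1)) * ρ ^ (k + (m + 1))) :=
    (summable_nat_add_iff (f := fun k => c k * ρ ^ k) (m + 1)).2 hsum
  have hg : Summable (fun k => g k * ρ ^ (k + 1)) := by
    have h := hshift.mul_right ((ρ ^ m)⁻¹)
    refine h.congr fun k => ?_
    show c (k + (m + 1)) * ρ ^ (k + (m + 1)) * (ρ ^ m)⁻¹ = g k * ρ ^ (k + 1)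
    have e : ρ ^ (k + (m + 1)) = ρ ^ (k + 1) * ρ ^ m := by
      rw [← pow_add]; congr 1; omega
    rw [e, hg_def]
    field_simp
  set F : ℕ × ℕ → ℝ := fun p => g p.2 * ρ ^ ((p.1 + 1) * (p.2 + 1)) / ((p.1 : ℝ) + 1)
    with hF_def
  have hFnn : ∀ p, 0 ≤ F p := by
    intro p
    apply div_nonneg (mul_nonneg (hgnn _) (hρm _).le)
    positivity
  -- summability of the double sum
  have hgeo : Summable (fun j : ℕ => ρ ^ j) := summable_geometric_of_lt_one hρ0.le hρ1
  have hbig : Summable (fun p : ℕ × ℕ => ρ ^ p.1 * (g p.2 * ρ ^ (p.2 + 1))) :=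
    hgeo.mul_of_nonneg hg (fun j => (hρm j).le)
      (fun k => mul_nonneg (hgnn k) (hρm _).le)
  have hFsum : Summable F := by
    apply hbig.of_nonneg_of_le hFnn
    rintro ⟨j, k⟩
    have h1 : ρ ^ ((j + 1) * (k + 1)) ≤ ρ ^ (j + (k + 1)) := by
      apply pow_le_pow_of_le_one hρ0.le hρle1
      have : (j + 1) * (k + 1) = j * k + (j + (k + 1)) := by ring
      omega
    calc F (j, k) = g k * ρ ^ ((j + 1) * (k + 1)) / ((j : ℝ) + 1) := rfl
      _ ≤ g k * ρ ^ ((j + 1) * (k + 1)) := by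
          apply div_le_self (mul_nonneg (hgnn k) (hρm _).le)
          have : (0:ℝ) ≤ (j:ℝ) := Nat.cast_nonneg j
          linarith
      _ ≤ g k * ρ ^ (j + (k + 1)) := mul_le_mul_of_nonneg_left h1 (hgnn k)
      _ = ρ ^ j * (g k * ρ ^ (k + 1)) := by rw [pow_add]; ring
  -- row sums
  have hrow : ∀ j : ℕ, HasSum (fun k => F (j, k)) (term j) := by
    intro j
    set z := ρ ^ (j + 1) with hz_def
    have hz0 : 0 < z := hρm _
    have hz1 : z < 1 := pow_lt_one₀ hρ0.le hρ1 (Nat.succ_ne_zero j)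
    have hzle : z ≤ ρ := by
      calc z = ρ ^ (j + 1) := rfl
        _ ≤ ρ ^ 1 := pow_le_pow_of_le_one hρ0.le hρle1 (by omega)
        _ = ρ := pow_one ρ
    have hcz : Summable (fun k => c k * z ^ k) := by
      apply hsum.of_nonneg_of_le
        (fun k => mul_nonneg (hcnn k) (pow_nonneg hz0.le k))
      intro k
      exact mul_le_mul_of_nonneg_left (pow_le_pow_left₀ hz0.le hzle k) (hcnn k)
    have hczs : Summable (fun k => c (k + (m + 1)) * z ^ (k + (m + 1))) :=
      (summable_nat_add_iff (f := fun k => c k * z ^ k) (m + 1)).2 hcz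
    have hgz : Summable (fun k => g k * z ^ (k + 1)) := by
      have h := hczs.mul_right ((z ^ m)⁻¹)
      refine h.congr fun k => ?_
      show c (k + (m + 1)) * z ^ (k + (m + 1)) * (z ^ m)⁻¹ = g k * z ^ (k + 1)
      have e : z ^ (k + (m + 1)) = z ^ (k + 1) * z ^ m := by
        rw [← pow_add]; congr 1; omega
      rw [e, hg_def]
      field_simp
    have hCt : Ct c z = c m * z ^ m + (∑' k, g k * z ^ (k + 1)) * z ^ m := by
      have h1 := Summable.sum_add_tsum_nat_add (f := fun k => c k * z ^ k) (m + 1) hcz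
      have h2 : ∑ i ∈ Finset.range (m + 1), c i * z ^ i = c m * z ^ m := by
        rw [Finset.sum_eq_single m]
        · intro b hb hbm
          have hblt : b < m := by
            have := Finset.mem_range.1 hb; omega
          rw [hml b hblt]; ring
        · intro h; exact absurd (Finset.self_mem_range_succ m) h
      have h3 : (∑' i : ℕ, c (i + (m + 1)) * z ^ (i + (m + 1)))
          = (∑' k, g k * z ^ (k + 1)) * z ^ m := by
        rw [← tsum_mul_right]
        apply tsum_congr
        intro k
        have e : z ^ (k + (m + 1)) = z ^ (k + 1) * z ^ m := by
          rw [← pow_add]; congr 1; omega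
        rw [e, hg_def]; ring
      rw [Ct, ← h1, h2, h3]
    have hF_eq : (fun k => F (j, k)) = fun k => g k * z ^ (k + 1) / ((j : ℝ) + 1) := by
      funext k
      show g k * ρ ^ ((j + 1) * (k + 1)) / ((j : ℝ) + 1) = _
      rw [pow_mul]
    have hS : HasSum (fun k => F (j, k)) ((∑' k, g k * z ^ (k + 1)) / ((j : ℝ) + 1)) := by
      rw [hF_eq]
      exact hgz.hasSum.div_const _
    have hterm_eq : term j = (∑' k, g k * z ^ (k + 1)) / ((j : ℝ) + 1) := by
      show (Ct c z - c m * ρ ^ ((j + 1) * m)) / (((j : ℝ) + 1) * ρ ^ ((j + 1) * m)) = _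
      have e : ρ ^ ((j + 1) * m) = z ^ m := by rw [pow_mul]
      rw [e, hCt]
      have hzm : (0:ℝ) < z ^ m := pow_pos hz0 m
      have hj1 : (0:ℝ) < (j : ℝ) + 1 := by positivity
      field_simp
      ring
    rw [hterm_eq]
    exact hS
  -- column sums
  have hcol : ∀ k : ℕ, HasSum (fun j => F (j, k))
      (g k * (-Real.log (1 - ρ ^ (k + 1)))) := by
    intro k
    have hx : |ρ ^ (k + 1)| < 1 := by
      rw [abs_of_pos (hρm _)]
      exact pow_lt_one₀ hρ0.le hρ1 (Nat.succ_ne_zero k)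
    have h := (Real.hasSum_pow_div_log_of_abs_lt_one hx).mul_left (g k)
    have he : (fun j : ℕ => g k * ((ρ ^ (k + 1)) ^ (j + 1) / ((j : ℝ) + 1)))
        = fun j => F (j, k) := by
      funext j
      show _ = g k * ρ ^ ((j + 1) * (k + 1)) / ((j : ℝ) + 1)
      rw [← pow_mul, Nat.mul_comm (k + 1) (j + 1), mul_div_assoc]
    rw [← he]
    exact h
  -- assemble
  have hpair := (summable_prod_of_nonneg hFnn).1 hFsum
  have hterm_sum : Summable term := by
    refine hpair.2.congr fun j => ?_
    exact (hrow j).tsum_eq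
  -- swapped summability
  have hFswap : Summable (fun p : ℕ × ℕ => F p.swap) := hFsum.prod_symm
  have hswap := (summable_prod_of_nonneg (fun p => hFnn p.swap)).1 hFswap
  set L : ℕ → ℝ := fun k => g k * Real.log (1 - ρ ^ (k + 1)) with hL_def
  have hnegL : ∀ k, (∑' j, F (j, k)) = -(L k) := by
    intro k
    rw [(hcol k).tsum_eq, hL_def]
    ring
  have hLsum : Summable L := by
    have h1 : Summable (fun k => ∑' j, F (j, k)) := hswap.2
    have h2 : Summable (fun k => -(L k)) := h1.congr hnegL
    exact h2.neg.congr fun k => neg_neg (L k)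
  -- total identity
  have e1 : (∑' p : ℕ × ℕ, F p) = ∑' j, ∑' k, F (j, k) := Summable.tsum_prod' hFsum hpair.1
  have e2 : (∑' j, ∑' k, F (j, k)) = ∑' j, term j :=
    tsum_congr fun j => (hrow j).tsum_eq
  have e3 : (∑' p : ℕ × ℕ, F p) = ∑' k, ∑' j, F (j, k) := by
    have h := Summable.tsum_prod' (f := fun p : ℕ × ℕ => F p.swap) hFswap
      (fun k => ((hcol k).summable : Summable fun j => F (j, k)))
    have h' : (∑' p : ℕ × ℕ, F p.swap) = ∑' p : ℕ × ℕ, F p :=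
      (Equiv.prodComm ℕ ℕ).tsum_eq F
    rw [← h', h]
    exact tsum_congr fun k => tsum_congr fun j => rfl
  have e4 : (∑' k, ∑' j, F (j, k)) = -(∑' k, L k) := by
    rw [tsum_congr hnegL, tsum_neg]
  have hL_eq : (∑' k, L k) = -(∑' j, term j) := by
    have : (∑' j, term j) = -(∑' k, L k) := by rw [← e2, ← e1, e3, e4]
    rw [this, neg_neg]
  -- product equals exp of partial sums
  have hprod_eq : ∀ S : ℕ, (∏ k ∈ Finset.Ioc m S, (1 - ρ ^ (k - m)) ^ (c k))
      = Real.exp (∑ i ∈ Finset.range (S - m), L i) := by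
    intro S
    have h1 : Finset.Ioc m S = Finset.Ico (m + 1) (S + 1) := by
      ext x; simp only [Finset.mem_Ioc, Finset.mem_Ico]; omega
    rw [h1, Finset.prod_Ico_eq_prod_range]
    have h2 : S + 1 - (m + 1) = S - m := by omega
    rw [h2, Real.exp_sum]
    apply Finset.prod_congr rfl
    intro i _
    have h3 : m + 1 + i - m = i + 1 := by omega
    rw [h3]
    have hlt : ρ ^ (i + 1) < 1 := pow_lt_one₀ hρ0.le hρ1 (Nat.succ_ne_zero i)
    have hpos : (0:ℝ) < 1 - ρ ^ (i + 1) := by linarith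
    rw [Real.rpow_def_of_pos hpos]
    congr 1
    show Real.log (1 - ρ ^ (i + 1)) * c (m + 1 + i) = g i * Real.log (1 - ρ ^ (i + 1))
    have e : m + 1 + i = i + (m + 1) := by omega
    rw [e, hg_def]
    ring
  -- tendsto
  have hLt : Tendsto (fun n => ∑ i ∈ Finset.range n, L i) atTop (nhds (∑' k, L k)) :=
    hLsum.hasSum.tendsto_sum_nat
  have hcomp : Tendsto (fun S : ℕ => ∑ i ∈ Finset.range (S - m), L i) atTop
      (nhds (∑' k, L k)) := hLt.comp (tendsto_sub_atTop_nat m)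
  have hfinal : Tendsto (fun S : ℕ => Real.exp (∑ i ∈ Finset.range (S - m), L i)) atTop
      (nhds (Real.exp (∑' k, L k))) := (Real.continuous_exp.tendsto _).comp hcomp
  refine ⟨hterm_sum, ?_⟩
  have hfun : (fun S : ℕ => ∏ k ∈ Finset.Ioc m S, (1 - ρ ^ (k - m)) ^ (c k))
      = fun S : ℕ => Real.exp (∑ i ∈ Finset.range (S - m), L i) := funext hprod_eq
  rw [hfun, ← hL_eq]
  exact hfinal
end

section
/- Let (c_k)_{k≥1} be a sequence of nonnegative real numbers that is subexponential with radius of convergence ρ ∈ (0,∞), let m := min{k : c_k > 0}, and let (X_i)_{i≥1} be independent identically distributed ℕ-valued random variables with P(X_1 = k) = c_k ρ^k / C(ρ) for k ≥ 1 (so X_i ≥ m almost surely). Then for every δ > 0 there exist A > 0 and N_0 ∈ ℕ such that for all p, r ∈ ℕ₀ and all integers Ñ ≥ N_0: P( ∑_{i=1}^{p} (X_i − m) = Ñ − r ) ≤ A · (1+δ)^{p+r} · P( X_1 = Ñ + m ). (For p = 0 the left-hand side is 1 if r = Ñ and 0 otherwise.) -/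
open scoped ENNReal NNReal BigOperators
open MeasureTheory Filter

set_option maxHeartbeats 2000000

/-- A sequence `(c_k)` of nonnegative reals (with `c 0 = 0`) is subexponential with radius of
convergence `ρ`. -/
def IsSubexp (c : ℕ → ℝ) (ρ : ℝ) : Prop :=
  (∀ k, 0 ≤ c k) ∧ c 0 = 0 ∧ (∃ K, ∀ k, K ≤ k → 0 < c k) ∧
  Summable (fun k => c k * ρ ^ k) ∧
  Filter.Tendsto (fun n => c (n - 1) / c n) Filter.atTop (nhds ρ) ∧
  Filter.Tendsto (fun n => (∑ k ∈ Finset.range (n + 1), c k * c (n - k)) / c n)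
    Filter.atTop (nhds (2 * Ct c ρ))

noncomputable def convPow (q : ℕ → ℝ) : ℕ → ℕ → ℝ
  | 0, n => if n = 0 then 1 else 0
  | p+1, n => ∑ k ∈ Finset.range (n+1), q k * convPow q p (n-k)

lemma convPow_nonneg {q : ℕ → ℝ} (hq : ∀ k, 0 ≤ q k) (p n : ℕ) : 0 ≤ convPow q p n := by
  induction p generalizing n with
  | zero => simp only [convPow]; positivity
  | succ p ih =>
    simp only [convPow]
    exact Finset.sum_nonneg fun k _ => mul_nonneg (hq k) (ih _)

lemma convPow_le_one {q : ℕ → ℝ} (hq : ∀ k, 0 ≤ q k)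
    (hs : ∀ n, ∑ k ∈ Finset.range n, q k ≤ 1) (p n : ℕ) : convPow q p n ≤ 1 := by
  induction p generalizing n with
  | zero => simp only [convPow]; split <;> norm_num
  | succ p ih =>
    simp only [convPow]
    calc ∑ k ∈ Finset.range (n+1), q k * convPow q p (n-k)
        ≤ ∑ k ∈ Finset.range (n+1), q k := by
          refine Finset.sum_le_sum fun k _ => ?_
          nlinarith [ih (n-k), hq k, convPow_nonneg hq p (n-k)]
      _ ≤ 1 := hs _

lemma meas_sum_eq {Ω : Type*} [MeasurableSpace Ω] (μ : Measure Ω) [IsProbabilityMeasure μ]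
    (X : ℕ → Ω → ℕ) (hmeas : ∀ i, Measurable (X i))
    (hindep : ProbabilityTheory.iIndepFun X μ)
    (q : ℕ → ℝ) (hq : ∀ k, 0 ≤ q k)
    (hdist : ∀ i k : ℕ, μ {ω | X i ω = k} = ENNReal.ofReal (q k)) :
    ∀ p n : ℕ, μ {ω | ∑ i ∈ Finset.range p, X i ω = n} = ENNReal.ofReal (convPow q p n) := by
  intro p
  induction p with
  | zero =>
    intro n
    simp only [Finset.range_zero, Finset.sum_empty, convPow]
    rcases eq_or_ne n 0 with h | h
    · subst h; simp [Set.setOf_true]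
    · simp [h, Ne.symm h]
  | succ p ih =>
    intro n
    have hS : Measurable (fun ω => ∑ i ∈ Finset.range p, X i ω) := by
      exact Finset.measurable_sum _ fun i _ => hmeas i
    have hsplit : {ω | ∑ i ∈ Finset.range (p+1), X i ω = n}
        = ⋃ k ∈ Finset.range (n+1),
          ({ω | X p ω = k} ∩ {ω | ∑ i ∈ Finset.range p, X i ω = n - k}) := by
      ext ω
      simp only [Set.mem_setOf_eq, Set.mem_iUnion, Set.mem_inter_iff, Finset.mem_range,
        Finset.sum_range_succ]
      constructor
      · rintro rfl
        exact ⟨X p ω, by omega, rfl, by omega⟩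
      · rintro ⟨k, hk, h1, h2⟩
        omega
    rw [hsplit, measure_biUnion_finset]
    · have indep : ProbabilityTheory.IndepFun
          (∑ j ∈ Finset.range p, X j) (X p) μ :=
        hindep.indepFun_sum_range_succ hmeas p
      have hterm : ∀ k ∈ Finset.range (n+1),
          μ ({ω | X p ω = k} ∩ {ω | ∑ i ∈ Finset.range p, X i ω = n - k})
          = ENNReal.ofReal (q k * convPow q p (n-k)) := by
        intro k _
        have h1 : {ω | X p ω = k} = (X p) ⁻¹' {k} := rfl
        have h2 : {ω | ∑ i ∈ Finset.range p, X i ω = n - k}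
            = (∑ j ∈ Finset.range p, X j) ⁻¹' {n - k} := by
          ext ω; simp [Finset.sum_apply]
        rw [Set.inter_comm, h1, h2,
          indep.measure_inter_preimage_eq_mul _ _ (measurableSet_singleton _)
            (measurableSet_singleton _)]
        have := ih (n - k)
        have h3 : ((∑ j ∈ Finset.range p, X j) ⁻¹' {n - k}) =
            {ω | ∑ i ∈ Finset.range p, X i ω = n - k} := h2.symm
        rw [h3, this, ← h1, hdist p k, mul_comm, ← ENNReal.ofReal_mul (hq k)]
      rw [Finset.sum_congr rfl hterm]
      rw [← ENNReal.ofReal_sum_of_nonneg]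
      · rfl
      · intro k _; exact mul_nonneg (hq k) (convPow_nonneg hq p _)
    · intro a ha b hb hab
      simp only [Function.onFun]
      apply Set.disjoint_left.2
      rintro ω ⟨h1, _⟩ ⟨h3, _⟩
      exact hab (h1 ▸ h3 ▸ rfl)
    · intro k _
      exact ((hmeas p) (measurableSet_singleton _)).inter (hS (measurableSet_singleton _))

lemma chain_up (q : ℕ → ℝ) (a : ℝ) (ha : 0 ≤ a) (N : ℕ)
    (h : ∀ n, N ≤ n → q n ≤ a * q (n+1)) :
    ∀ j n, N ≤ n → q n ≤ a^j * q (n+j) := by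
  intro j
  induction j with
  | zero => intro n _; simp
  | succ j ih =>
    intro n hn
    calc q n ≤ a^j * q (n+j) := ih n hn
      _ ≤ a^j * (a * q (n+j+1)) := by
          have := h (n+j) (by omega)
          exact mul_le_mul_of_nonneg_left this (pow_nonneg ha j)
      _ = a^(j+1) * q (n+(j+1)) := by ring_nf
lemma chain_down (q : ℕ → ℝ) (a : ℝ) (ha : 0 ≤ a) (N : ℕ)
    (h : ∀ n, N ≤ n → q (n+1) ≤ a * q n) :
    ∀ j n, N ≤ n → q (n+j) ≤ a^j * q n := by
  intro j
  induction j with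
  | zero => intro n _; simp
  | succ j ih =>
    intro n hn
    calc q (n+(j+1)) = q ((n+j)+1) := by ring_nf
      _ ≤ a * q (n+j) := h (n+j) (by omega)
      _ ≤ a * (a^j * q n) := mul_le_mul_of_nonneg_left (ih n hn) ha
      _ = a^(j+1) * q n := by ring

lemma kesten (q : ℕ → ℝ) (hq0 : ∀ k, 0 ≤ q k)
    (hs1 : ∀ n, ∑ k ∈ Finset.range n, q k ≤ 1)
    (ε η : ℝ) (hε : 0 < ε) (hε1 : ε ≤ 1) (hη : 0 < η)
    (h : ℕ) (hh1 : 1 ≤ h) (hwin : 1 - ε/4 ≤ ∑ k ∈ Finset.range h, q k)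
    (hηh : (1+η)^h ≤ 1 + ε/4)
    (N₁ : ℕ) (hN₁1 : 1 ≤ N₁)
    (hpos : ∀ n, N₁ ≤ n → 0 < q n)
    (hup : ∀ n, N₁ ≤ n → q n ≤ (1+η) * q (n+1))
    (hdown : ∀ n, N₁ ≤ n → q (n+1) ≤ (1+η) * q n)
    (N₂ : ℕ) (hconv : ∀ n, N₂ ≤ n → ∑ k ∈ Finset.range (n+1), q k * q (n-k) ≤ (2+ε/4) * q n)
    (n₀ : ℕ) (hn₀ : n₀ = N₁ + N₂ + h + 1) :
    ∃ A₁ : ℝ, 0 < A₁ ∧ ∀ p n, n₀ ≤ n → convPow q p n ≤ A₁ * (1+ε)^p * q n := by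
  have hη1 : (1:ℝ) ≤ 1 + η := by linarith
  have hη0 : (0:ℝ) ≤ 1 + η := by linarith
  set N₃ := n₀ + N₁ with hN₃
  set M : ℝ := (1+η)^n₀ with hM
  have hM1 : (1:ℝ) ≤ M := by
    calc (1:ℝ) = 1^n₀ := (one_pow _).symm
      _ ≤ (1+η)^n₀ := pow_le_pow_left₀ zero_le_one hη1 n₀
  -- minimum of q on [n₀, N₃)
  have hne : (Finset.Ico n₀ N₃).Nonempty := by
    refine ⟨n₀, ?_⟩; simp [hN₃]; omega
  set qmin : ℝ := (Finset.Ico n₀ N₃).inf' hne q with hqmin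
  have hqminpos : 0 < qmin := by
    rw [hqmin, Finset.lt_inf'_iff]
    intro i hi
    simp only [Finset.mem_Ico] at hi
    exact hpos i (by omega)
  have hqminle : ∀ n, n₀ ≤ n → n < N₃ → qmin ≤ q n := by
    intro n h1 h2
    exact Finset.inf'_le q (by simp [Finset.mem_Ico]; omega)
  set G : ℝ := max (1/qmin) ((n₀+1) * M + 1) with hG
  have hG1 : (1:ℝ) ≤ G := by
    refine le_trans ?_ (le_max_right _ _)
    have : (0:ℝ) ≤ (n₀:ℝ)+1 := by positivity
    nlinarith
  have hGpos : (0:ℝ) < G := by linarith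
  -- the key induction
  have key : ∀ p, ∀ n, n₀ ≤ n →
      convPow q p n ≤ G * (∑ i ∈ Finset.range (p+1), (1+ε)^i) * q n := by
    intro p
    induction p with
    | zero =>
      intro n hn
      have : convPow q 0 n = 0 := by
        simp only [convPow]; rw [if_neg]; omega
      rw [this]
      have hs : (0:ℝ) ≤ ∑ i ∈ Finset.range 1, (1+ε)^i := by positivity
      exact mul_nonneg (mul_nonneg hGpos.le (by positivity)) (hq0 n)
    | succ p ih =>
      intro n hn
      have hβ1 : (1:ℝ) ≤ ∑ i ∈ Finset.range (p+1+1), (1+ε)^i := by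
        calc (1:ℝ) = ∑ i ∈ Finset.range 1, (1+ε)^i := by simp
          _ ≤ _ := by
            apply Finset.sum_le_sum_of_subset_of_nonneg
            · exact Finset.range_subset_range.2 (by omega)
            · intro i _ _; positivity
      by_cases hcase : n < N₃
      · -- small n: crude bound
        calc convPow q (p+1) n ≤ 1 := convPow_le_one hq0 hs1 _ _
          _ ≤ G * q n := by
            have h1 : 1/qmin ≤ G := le_max_left _ _
            have h2 : qmin ≤ q n := hqminle n hn hcase
            rw [div_le_iff₀ hqminpos] at h1
            nlinarith
          _ = G * 1 * q n := by ring
          _ ≤ G * (∑ i ∈ Finset.range (p+1+1), (1+ε)^i) * q n :=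
            mul_le_mul_of_nonneg_right
              (mul_le_mul_of_nonneg_left hβ1 hGpos.le) (hq0 n)
      · push_neg at hcase
        have hn2 : N₂ ≤ n := by omega
        set β : ℝ := ∑ i ∈ Finset.range (p+1), (1+ε)^i with hβ
        have hβpos : 0 < β := by
          rw [hβ]
          apply Finset.sum_pos
          · intro i _; positivity
          · exact ⟨0, by simp⟩
        have hsplit := Finset.sum_filter_add_sum_filter_not (Finset.range (n+1))
          (fun k => k + n₀ ≤ n) (fun k => q k * convPow q p (n-k))
        -- Part 1
        have part1 : ∑ k ∈ (Finset.range (n+1)).filter (fun k => k + n₀ ≤ n),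
            q k * convPow q p (n-k) ≤ G * β * ((1+ε) * q n) := by
          have step1 : ∑ k ∈ (Finset.range (n+1)).filter (fun k => k + n₀ ≤ n),
              q k * convPow q p (n-k)
              ≤ G * β * ∑ k ∈ (Finset.range (n+1)).filter (fun k => k + n₀ ≤ n),
                q k * q (n-k) := by
            rw [Finset.mul_sum]
            refine Finset.sum_le_sum ?_
            intro k hk
            simp only [Finset.mem_filter, Finset.mem_range] at hk
            have h1 : n₀ ≤ n - k := by omega
            have := ih (n-k) h1
            calc q k * convPow q p (n-k) ≤ q k * (G * β * q (n-k)) :=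
                mul_le_mul_of_nonneg_left this (hq0 k)
              _ = G * β * (q k * q (n-k)) := by ring
          refine le_trans step1 ?_
          have hGβ : 0 ≤ G * β := by positivity
          refine mul_le_mul_of_nonneg_left ?_ hGβ
          -- the convolution tail bound
          set W := (Finset.range h).image (fun j => n - j) with hW
          have hWsub : W ⊆ (Finset.range (n+1)).filter (fun k => ¬ (k + n₀ ≤ n)) := by
            intro k hk
            simp only [hW, Finset.mem_image, Finset.mem_range] at hk
            obtain ⟨j, hj, rfl⟩ := hk
            simp only [Finset.mem_filter, Finset.mem_range]
            constructor
            · omega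
            · omega
          have hWsum : ∑ k ∈ W, q k * q (n-k) = ∑ j ∈ Finset.range h, q (n-j) * q j := by
            rw [hW, Finset.sum_image]
            · apply Finset.sum_congr rfl
              intro j hj
              simp only [Finset.mem_range] at hj
              have : n - (n - j) = j := by omega
              rw [this]
            · intro a ha b hb hab
              simp only [Finset.mem_coe, Finset.mem_range] at ha hb hab
              omega
          have hWlow : (1 - ε/2) * q n ≤ ∑ j ∈ Finset.range h, q (n-j) * q j := by
            have hqn : 0 < q n := hpos n (by omega)
            have hstep : ∀ j ∈ Finset.range h, (q n / (1+η)^h) * q j ≤ q (n-j) * q j := by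
              intro j hj
              simp only [Finset.mem_range] at hj
              have hNj : N₁ ≤ n - j := by omega
              have := chain_down q (1+η) hη0 N₁ hdown j (n-j) hNj
              have heq : n - j + j = n := by omega
              rw [heq] at this
              have hpowpos : (0:ℝ) < (1+η)^j := by positivity
              have hpowpos2 : (0:ℝ) < (1+η)^h := by positivity
              have h2 : q n / (1+η)^h ≤ q (n-j) := by
                rw [div_le_iff₀ hpowpos2]
                calc q n ≤ (1+η)^j * q (n-j) := this
                  _ ≤ (1+η)^h * q (n-j) := by
                    have := pow_le_pow_right₀ hη1 (le_of_lt hj)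
                    nlinarith [hq0 (n-j)]
                  _ = q (n-j) * (1+η)^h := by ring
              exact mul_le_mul_of_nonneg_right h2 (hq0 j)
            calc (1 - ε/2) * q n ≤ (q n / (1+η)^h) * ∑ j ∈ Finset.range h, q j := by
                  have hpowpos : (0:ℝ) < (1+η)^h := by positivity
                  rw [div_mul_eq_mul_div, le_div_iff₀ hpowpos]
                  have hsum0 : (0:ℝ) ≤ ∑ j ∈ Finset.range h, q j :=
                    Finset.sum_nonneg fun i _ => hq0 i
                  have hA : (1-ε/2) * q n * (1+η)^h ≤ (1-ε/2) * q n * (1+ε/4) :=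
                    mul_le_mul_of_nonneg_left hηh (by nlinarith)
                  have hB : (1-ε/4) * q n ≤ (∑ j ∈ Finset.range h, q j) * q n :=
                    mul_le_mul_of_nonneg_right hwin hqn.le
                  nlinarith [hqn.le, mul_nonneg hqn.le (sq_nonneg ε)]
              _ ≤ ∑ j ∈ Finset.range h, q (n-j) * q j := by
                  rw [Finset.mul_sum]
                  exact Finset.sum_le_sum hstep
          -- combine
          have htot := hconv n hn2
          have hparts : ∑ k ∈ (Finset.range (n+1)).filter (fun k => k + n₀ ≤ n), q k * q (n-k)
              + ∑ k ∈ W, q k * q (n-k) ≤ ∑ k ∈ Finset.range (n+1), q k * q (n-k) := by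
            rw [← Finset.sum_filter_add_sum_filter_not (Finset.range (n+1))
              (fun k => k + n₀ ≤ n) (fun k => q k * q (n-k))]
            have : ∑ k ∈ W, q k * q (n-k)
                ≤ ∑ k ∈ (Finset.range (n+1)).filter (fun k => ¬ (k + n₀ ≤ n)),
                  q k * q (n-k) := by
              apply Finset.sum_le_sum_of_subset_of_nonneg hWsub
              intro i _ _
              exact mul_nonneg (hq0 i) (hq0 _)
            linarith
          rw [hWsum] at hparts
          have : ∑ k ∈ (Finset.range (n+1)).filter (fun k => k + n₀ ≤ n), q k * q (n-k)
              ≤ (2+ε/4) * q n - (1-ε/2) * q n := by linarith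
          refine le_trans this ?_
          have hqn : 0 ≤ q n := hq0 n
          nlinarith
        -- Part 2
        have part2 : ∑ k ∈ (Finset.range (n+1)).filter (fun k => ¬ (k + n₀ ≤ n)),
            q k * convPow q p (n-k) ≤ G * q n := by
          have hqn : 0 ≤ q n := hq0 n
          have hterm : ∀ k ∈ (Finset.range (n+1)).filter (fun k => ¬ (k + n₀ ≤ n)),
              q k * convPow q p (n-k) ≤ M * q n := by
            intro k hk
            simp only [Finset.mem_filter, Finset.mem_range, not_le] at hk
            obtain ⟨hk1, hk2⟩ := hk
            have hkN : N₁ ≤ k := by omega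
            have := chain_up q (1+η) hη0 N₁ hup (n - k) k hkN
            have heq : k + (n - k) = n := by omega
            rw [heq] at this
            have hD : convPow q p (n-k) ≤ 1 := convPow_le_one hq0 hs1 _ _
            have hqk : q k ≤ M * q n := by
              refine le_trans this ?_
              have hj : n - k ≤ n₀ := by omega
              have : (1+η)^(n-k) ≤ M := by
                rw [hM]; exact pow_le_pow_right₀ hη1 hj
              nlinarith
            nlinarith [hq0 k, convPow_nonneg hq0 p (n-k)]
          have hcard : ((Finset.range (n+1)).filter (fun k => ¬ (k + n₀ ≤ n))).card ≤ n₀ := by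
            have hsub : (Finset.range (n+1)).filter (fun k => ¬ (k + n₀ ≤ n))
                ⊆ (Finset.range n₀).image (fun j => n - j) := by
              intro k hk
              simp only [Finset.mem_filter, Finset.mem_range, not_le] at hk
              simp only [Finset.mem_image, Finset.mem_range]
              exact ⟨n - k, by omega, by omega⟩
            calc ((Finset.range (n+1)).filter (fun k => ¬ (k + n₀ ≤ n))).card
                ≤ ((Finset.range n₀).image (fun j => n - j)).card := Finset.card_le_card hsub
              _ ≤ n₀ := by
                  refine le_trans Finset.card_image_le ?_
                  simp
          calc ∑ k ∈ (Finset.range (n+1)).filter (fun k => ¬ (k + n₀ ≤ n)),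
              q k * convPow q p (n-k)
              ≤ ∑ _k ∈ (Finset.range (n+1)).filter (fun k => ¬ (k + n₀ ≤ n)), M * q n :=
                Finset.sum_le_sum hterm
            _ = (((Finset.range (n+1)).filter (fun k => ¬ (k + n₀ ≤ n))).card : ℝ) * (M * q n) := by
                rw [Finset.sum_const, nsmul_eq_mul]
            _ ≤ (n₀ : ℝ) * (M * q n) := by
                have : (((Finset.range (n+1)).filter (fun k => ¬ (k + n₀ ≤ n))).card : ℝ) ≤ n₀ := by
                  exact_mod_cast hcard
                have hMq : 0 ≤ M * q n := by positivity
                nlinarith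
            _ ≤ G * q n := by
                have : (n₀:ℝ) * M + 0 ≤ (n₀+1) * M + 1 := by nlinarith [hM1]
                have hG2 : (n₀+1) * M + 1 ≤ G := le_max_right _ _
                nlinarith [hM1, hq0 n]
        -- combine
        have geom : (1+ε) * β + 1 = ∑ i ∈ Finset.range (p+1+1), (1+ε)^i := by
          rw [hβ]
          exact (geom_sum_succ (x := 1+ε) (n := p+1)).symm
        calc convPow q (p+1) n
            = ∑ k ∈ (Finset.range (n+1)).filter (fun k => k + n₀ ≤ n), q k * convPow q p (n-k)
            + ∑ k ∈ (Finset.range (n+1)).filter (fun k => ¬ (k + n₀ ≤ n)),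
                q k * convPow q p (n-k) := by
              simp only [convPow]
              rw [hsplit]
          _ ≤ G * β * ((1+ε) * q n) + G * q n := add_le_add part1 part2
          _ = G * ((1+ε) * β + 1) * q n := by ring
          _ = G * (∑ i ∈ Finset.range (p+1+1), (1+ε)^i) * q n := by rw [geom]
  -- convert geometric sum to exponential
  refine ⟨G * (1+ε) / ε, by positivity, ?_⟩
  intro p n hn
  refine le_trans (key p n hn) ?_
  have hgeom : ∑ i ∈ Finset.range (p+1), (1+ε)^i = ((1+ε)^(p+1) - 1)/ε := by
    rw [geom_sum_eq (by linarith : (1:ℝ)+ε ≠ 1)]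
    congr 1
    ring
  rw [hgeom]
  have hpow0 : (0:ℝ) ≤ (1+ε)^(p+1) := by positivity
  have hXY : ((1+ε)^(p+1) - 1)/ε ≤ (1+ε)^(p+1)/ε :=
    (div_le_div_iff_of_pos_right hε).2 (by linarith)
  calc G * (((1+ε)^(p+1) - 1)/ε) * q n
      ≤ G * ((1+ε)^(p+1)/ε) * q n :=
        mul_le_mul_of_nonneg_right (mul_le_mul_of_nonneg_left hXY hGpos.le) (hq0 n)
    _ = G * (1+ε)/ε * (1+ε)^p * q n := by rw [pow_succ]; ring

lemma exists_eta (ε : ℝ) (hε : 0 < ε) (k : ℕ) :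
    ∃ η : ℝ, 0 < η ∧ ∀ j : ℕ, j ≤ k → (1+η)^j ≤ 1+ε := by
  have hx1 : 1 < (1+ε) ^ (((k:ℝ)+1)⁻¹) :=
    (Real.one_lt_rpow_iff_of_pos (by linarith)).2 (Or.inl ⟨by linarith, by positivity⟩)
  refine ⟨(1+ε) ^ (((k:ℝ)+1)⁻¹) - 1, by linarith, ?_⟩
  intro j hj
  have hbase : 1 + ((1+ε) ^ (((k:ℝ)+1)⁻¹) - 1) = (1+ε) ^ (((k:ℝ)+1)⁻¹) := by ring
  rw [hbase, ← Real.rpow_natCast ((1+ε) ^ (((k:ℝ)+1)⁻¹)) j,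
    ← Real.rpow_mul (by linarith : (0:ℝ) ≤ 1+ε)]
  calc (1+ε) ^ (((k:ℝ)+1)⁻¹ * (j:ℝ))
      ≤ (1+ε) ^ (1:ℝ) := by
        apply Real.rpow_le_rpow_of_exponent_le (by linarith)
        have h1 : (j:ℝ) ≤ (k:ℝ)+1 := by
          have : (j:ℝ) ≤ (k:ℝ) := by exact_mod_cast hj
          linarith
        have h2 : (0:ℝ) < (k:ℝ)+1 := by positivity
        rw [inv_mul_eq_div, div_le_one h2]
        exact h1
    _ = 1+ε := Real.rpow_one _

/-- Uniform Kesten-type bound: if `(c_k)` is subexponential with radius of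
convergence `ρ` and `(X_i)` are iid with `P(X_1 = k) = c_k ρ^k / C(ρ)`, then for every
`δ > 0` there are `A > 0` and `N₀` such that for all `p, r ∈ ℕ` and all `Nt ≥ N₀`,
`P(∑_{i=1}^p (X_i - m) = Nt - r) ≤ A (1+δ)^{p+r} P(X_1 = Nt + m)`. -/
theorem statement17
    (c : ℕ → ℝ)
    (ρ : ℝ) (hρ0 : 0 < ρ)
    (hsub : IsSubexp c ρ)
    (m : ℕ) (hm : m = sInf {k | 0 < c k})
    {Ω : Type*} [MeasurableSpace Ω] (μ : Measure Ω) [IsProbabilityMeasure μ]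
    (X : ℕ → Ω → ℕ)
    (hmeas : ∀ i, Measurable (X i))
    (hindep : ProbabilityTheory.iIndepFun X μ)
    (hdist : ∀ i k : ℕ, μ {ω | X i ω = k} =
      ENNReal.ofReal (if 1 ≤ k then c k * ρ ^ k / Ct c ρ else 0)) :
    ∀ δ : ℝ, 0 < δ → ∃ A : ℝ, 0 < A ∧ ∃ N₀ : ℕ, ∀ p r : ℕ, ∀ Nt : ℕ, N₀ ≤ Nt →
      (μ {ω | ∑ i ∈ Finset.range p, ((X i ω : ℤ) - m) = (Nt : ℤ) - r}).toReal ≤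
        A * (1 + δ) ^ (p + r) * (μ {ω | X 0 ω = Nt + m}).toReal := by
  obtain ⟨hc0, hc00, ⟨K, hK⟩, hsumm, hratc, hconvc⟩ := hsub
  intro δ hδ
  have hterm_nonneg : ∀ k, 0 ≤ c k * ρ ^ k := fun k => mul_nonneg (hc0 k) (by positivity)
  have hCpos : 0 < Ct c ρ := by
    have h1 : c K * ρ ^ K ≤ Ct c ρ := Summable.le_tsum hsumm K fun i _ => hterm_nonneg i
    have h2 : 0 < c K * ρ ^ K := mul_pos (hK K le_rfl) (by positivity)
    linarith
  set C := Ct c ρ with hCdef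
  set q : ℕ → ℝ := fun k => c k * ρ ^ k / C with hqdef
  have hq0 : ∀ k, 0 ≤ q k := fun k => div_nonneg (hterm_nonneg k) hCpos.le
  have hq00 : q 0 = 0 := by simp [hqdef, hc00]
  have hdist' : ∀ i k : ℕ, μ {ω | X i ω = k} = ENNReal.ofReal (q k) := by
    intro i k
    rw [hdist i k]
    congr 1
    rcases Nat.eq_zero_or_pos k with rfl | hk
    · simp [hq00]
    · rw [if_pos (show 1 ≤ k from hk)]
  have hsumq : Summable q := by
    simpa [hqdef, div_eq_mul_inv] using hsumm.mul_right C⁻¹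
  have hqtot : ∑' k, q k = 1 := by
    rw [hqdef]
    rw [tsum_div_const]
    exact div_self hCpos.ne'
  have hs1 : ∀ n, ∑ k ∈ Finset.range n, q k ≤ 1 := by
    intro n
    calc ∑ k ∈ Finset.range n, q k ≤ ∑' k, q k :=
        Summable.sum_le_tsum _ (fun i _ => hq0 i) hsumq
      _ = 1 := hqtot
  have hqposK : ∀ n, K ≤ n → 0 < q n := by
    intro n hn
    have := hK n hn
    rw [hqdef]
    positivity
  -- ratio limit
  have hrat : Tendsto (fun n => q n / q (n+1)) atTop (nhds 1) := by
    have h1 : Tendsto (fun n => c n / c (n+1)) atTop (nhds ρ) := by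
      have := hratc.comp (tendsto_add_atTop_nat 1)
      simpa [Function.comp_def] using this
    have h2 : Tendsto (fun n => (c n / c (n+1)) * ρ⁻¹) atTop (nhds (ρ * ρ⁻¹)) :=
      h1.mul_const _
    rw [mul_inv_cancel₀ hρ0.ne'] at h2
    refine h2.congr fun n => ?_
    rcases eq_or_ne (c (n+1)) 0 with hz | hz
    · simp [hqdef, hz]
    · rw [hqdef]
      field_simp
      ring
  -- convolution limit
  have hconvq : Tendsto (fun n => (∑ k ∈ Finset.range (n+1), q k * q (n-k)) / q n)
      atTop (nhds 2) := by
    have h2 : Tendsto (fun n => ((∑ k ∈ Finset.range (n+1), c k * c (n-k)) / c n) * C⁻¹)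
        atTop (nhds (2 * C * C⁻¹)) := hconvc.mul_const _
    have h3 : (2 : ℝ) * C * C⁻¹ = 2 := by
      field_simp
    rw [h3] at h2
    refine h2.congr fun n => ?_
    have hsum_eq : ∑ k ∈ Finset.range (n+1), q k * q (n-k)
        = (∑ k ∈ Finset.range (n+1), c k * c (n-k)) * ρ^n / C^2 := by
      rw [Finset.sum_mul, Finset.sum_div]
      refine Finset.sum_congr rfl fun k hk => ?_
      simp only [Finset.mem_range] at hk
      have hkn : k + (n - k) = n := by omega
      rw [hqdef]
      rw [div_mul_div_comm]
      rw [show c k * ρ ^ k * (c (n-k) * ρ ^ (n-k)) = c k * c (n-k) * (ρ^k * ρ^(n-k)) by ring]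
      rw [← pow_add, hkn]
      rw [sq]
    rw [hsum_eq]
    rcases eq_or_ne (c n) 0 with hz | hz
    · simp [hqdef, hz]
    · rw [hqdef]
      field_simp
      try ring
  -- choice of ε
  set ε : ℝ := min δ 1 / 3 with hεdef
  have hεpos : 0 < ε := by
    rw [hεdef]
    have : 0 < min δ 1 := lt_min hδ one_pos
    linarith
  have hε1 : ε ≤ 1 := by
    rw [hεdef]
    have : min δ 1 ≤ 1 := min_le_right _ _
    linarith
  have hε3δ : 3 * ε ≤ δ := by
    rw [hεdef]
    have : min δ 1 ≤ δ := min_le_left _ _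
    linarith
  have hεδmain : (1+ε) * (1+ε/4) ≤ 1+δ := by nlinarith
  have hεδ2 : 1+ε/4 ≤ 1+δ := by linarith
  -- window h
  obtain ⟨h, hh1, hwin⟩ : ∃ h : ℕ, 1 ≤ h ∧ 1 - ε/4 ≤ ∑ k ∈ Finset.range h, q k := by
    have htend : Tendsto (fun n => ∑ k ∈ Finset.range n, q k) atTop (nhds 1) := by
      have := hsumq.hasSum.tendsto_sum_nat
      rwa [hqtot] at this
    have hev : ∀ᶠ n in atTop, 1 - ε/4 < ∑ k ∈ Finset.range n, q k :=
      htend.eventually (eventually_gt_nhds (by linarith))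
    obtain ⟨n, hn1, hn2⟩ := (hev.and (eventually_ge_atTop 1)).exists
    exact ⟨n, hn2, hn1.le⟩
  -- choice of η
  obtain ⟨η, hηpos, hηbd⟩ := exists_eta (ε/4) (by linarith) (max h (2*m))
  have hηh : (1+η)^h ≤ 1+ε/4 := hηbd h (le_max_left _ _)
  have hη2m : (1+η)^(2*m) ≤ 1+ε/4 := hηbd (2*m) (le_max_right _ _)
  have hηε : η ≤ ε/4 := by
    have := hηbd 1 (le_trans hh1 (le_max_left _ _))
    simpa using this
  have hη1 : (1:ℝ) ≤ 1+η := by linarith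
  have hη0' : (0:ℝ) ≤ 1+η := by linarith
  -- threshold N₁
  obtain ⟨N₁, hN₁⟩ : ∃ N₁ : ℕ, (1 ≤ N₁ ∧ K ≤ N₁) ∧
      ∀ n, N₁ ≤ n → (1+η)⁻¹ < q n / q (n+1) ∧ q n / q (n+1) < 1+η := by
    have h1 : (1+η)⁻¹ < 1 := by
      rw [inv_lt_one_iff₀]
      right; linarith
    have hev : ∀ᶠ n in atTop, (1+η)⁻¹ < q n / q (n+1) ∧ q n / q (n+1) < 1+η := by
      have := hrat.eventually (Ioo_mem_nhds h1 (by linarith : (1:ℝ) < 1+η))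
      simpa [Set.mem_Ioo] using this
    rw [eventually_atTop] at hev
    obtain ⟨N, hN⟩ := hev
    exact ⟨max N (max 1 K), ⟨by omega, by omega⟩, fun n hn => hN n (by omega)⟩
  obtain ⟨⟨hN₁1, hN₁K⟩, hN₁rat⟩ := hN₁
  have hpos : ∀ n, N₁ ≤ n → 0 < q n := fun n hn => hqposK n (by omega)
  have hup : ∀ n, N₁ ≤ n → q n ≤ (1+η) * q (n+1) := by
    intro n hn
    have hq1 : 0 < q (n+1) := hqposK (n+1) (by omega)
    have := (hN₁rat n hn).2
    rw [div_lt_iff₀ hq1] at this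
    linarith
  have hdown : ∀ n, N₁ ≤ n → q (n+1) ≤ (1+η) * q n := by
    intro n hn
    have hq1 : 0 < q (n+1) := hqposK (n+1) (by omega)
    have h2 := (hN₁rat n hn).1
    have h3 : (1+η)⁻¹ * q (n+1) < q n := by
      rw [← lt_div_iff₀ hq1] at *
      exact h2
    have hηpos' : (0:ℝ) < 1+η := by linarith
    calc q (n+1) = (1+η) * ((1+η)⁻¹ * q (n+1)) := by field_simp
      _ ≤ (1+η) * q n := by nlinarith
  -- threshold N₂
  obtain ⟨N₂, hN₂⟩ : ∃ N₂ : ℕ, K ≤ N₂ ∧ ∀ n, N₂ ≤ n →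
      ∑ k ∈ Finset.range (n+1), q k * q (n-k) ≤ (2+ε/4) * q n := by
    have hev : ∀ᶠ n in atTop,
        (∑ k ∈ Finset.range (n+1), q k * q (n-k)) / q n < 2+ε/4 :=
      hconvq.eventually (eventually_lt_nhds (by linarith))
    rw [eventually_atTop] at hev
    obtain ⟨N, hN⟩ := hev
    refine ⟨max N K, le_max_right _ _, fun n hn => ?_⟩
    have hqn : 0 < q n := hqposK n (by omega)
    have := hN n (by omega)
    rw [div_lt_iff₀ hqn] at this
    linarith
  obtain ⟨hN₂K, hN₂conv⟩ := hN₂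
  -- apply Kesten
  set n₀ : ℕ := N₁ + N₂ + h + 1 with hn₀def
  obtain ⟨A₁, hA₁pos, hA₁⟩ := kesten q hq0 hs1 ε η hεpos hε1 hηpos h hh1 hwin hηh
    N₁ hN₁1 hpos hup hdown N₂ hN₂conv n₀ rfl
  -- small-case growth threshold
  have hqN₁pos : 0 < q N₁ := hpos N₁ le_rfl
  obtain ⟨u₀, hu₀⟩ : ∃ u₀ : ℕ, ∀ u, u₀ ≤ u →
      (1+η)^(n₀+m) / q N₁ ≤ ((1+δ)/(1+η))^u := by
    have hgt : 1 < (1+δ)/(1+η) := by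
      rw [lt_div_iff₀ (by linarith : (0:ℝ) < 1+η)]
      linarith
    have htend := tendsto_pow_atTop_atTop_of_one_lt hgt
    have hev := htend.eventually_ge_atTop ((1+η)^(n₀+m) / q N₁)
    rw [eventually_atTop] at hev
    obtain ⟨u₀, hu₀⟩ := hev
    exact ⟨u₀, hu₀⟩
  have hsmall : ∀ Nt : ℕ, n₀ + u₀ ≤ Nt → 1 ≤ (1+δ)^(Nt - n₀) * q (Nt+m) := by
    intro Nt hNt
    set u := Nt - n₀ with hu
    have h1 : q N₁ ≤ (1+η)^(Nt+m-N₁) * q (Nt+m) := by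
      have := chain_up q (1+η) hη0' N₁ hup (Nt+m-N₁) N₁ le_rfl
      rwa [show N₁ + (Nt+m-N₁) = Nt+m by omega] at this
    have h2 : (1+η)^(Nt+m-N₁) ≤ (1+η)^(Nt+m) := pow_le_pow_right₀ hη1 (by omega)
    have h3 : q N₁ ≤ (1+η)^(Nt+m) * q (Nt+m) := by
      refine le_trans h1 (mul_le_mul_of_nonneg_right h2 (hq0 _))
    have h4 := hu₀ u (by omega)
    rw [div_pow, div_le_div_iff₀ hqN₁pos (by positivity : (0:ℝ) < (1+η)^u)] at h4
    rw [← pow_add] at h4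
    rw [show n₀+m+u = Nt + m by omega] at h4
    -- h4 : (1+η)^(Nt+m) ≤ q N₁ * (1+δ)^u
    have h5 := mul_le_mul_of_nonneg_right h4 (hq0 (Nt+m))
    have h6 : q N₁ * 1 ≤ q N₁ * ((1+δ)^u * q (Nt+m)) := by
      rw [mul_one]
      calc q N₁ ≤ (1+η)^(Nt+m) * q (Nt+m) := h3
        _ ≤ (1+δ)^u * q N₁ * q (Nt+m) := h5
        _ = q N₁ * ((1+δ)^u * q (Nt+m)) := by ring
    exact le_of_mul_le_mul_left h6 hqN₁pos
  set N₀ : ℕ := n₀ + u₀ + N₁ + 1 with hN₀def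
  set A : ℝ := A₁ * (1+ε/4) + 1 with hAdef
  have hApos : 0 < A := by rw [hAdef]; nlinarith
  have hA1 : 1 ≤ A := by rw [hAdef]; nlinarith
  have hA2 : A₁ * (1+ε/4) ≤ A := by linarith
  refine ⟨A, hApos, N₀, ?_⟩
  intro p r Nt hNt
  rw [hdist' 0 (Nt+m), ENNReal.toReal_ofReal (hq0 _)]
  have hqT : 0 < q (Nt+m) := hpos _ (by omega)
  by_cases hr : r ≤ Nt + p * m
  · set s : ℕ := Nt + p*m - r with hsdef
    have hE : {ω | ∑ i ∈ Finset.range p, ((X i ω : ℤ) - (m:ℤ)) = (Nt:ℤ) - (r:ℤ)}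
        = {ω | ∑ i ∈ Finset.range p, X i ω = s} := by
      ext ω
      simp only [Set.mem_setOf_eq]
      rw [Finset.sum_sub_distrib, Finset.sum_const, Finset.card_range, nsmul_eq_mul,
        show ((p:ℤ) * (m:ℤ)) = ((p*m : ℕ) : ℤ) by push_cast; ring, ← Nat.cast_sum]
      have hs' : s = Nt + p*m - r := hsdef
      have hr' : r ≤ Nt + p*m := hr
      generalize hg : p * m = pm at hs' hr' ⊢
      constructor
      · intro hh; omega
      · intro hh; omega
    rw [hE, meas_sum_eq μ X hmeas hindep q hq0 hdist' p s,
      ENNReal.toReal_ofReal (convPow_nonneg hq0 p s)]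
    by_cases hcase : n₀ ≤ s
    · -- main case
      have hKb := hA₁ p s hcase
      have hprod : m + r ≤ 2*m*(p+1) + r := by nlinarith
      have hprod2 : p*m ≤ 2*m*(p+1) + r := by nlinarith
      have hchain : q s ≤ (1+η)^(2*m*(p+1)+r) * q (Nt+m) := by
        rcases le_total s (Nt+m) with hle | hle
        · have hj : Nt+m-s ≤ m + r := by
            have hs' : s = Nt + p*m - r := hsdef
            have hr' : r ≤ Nt + p*m := hr
            generalize hg : p * m = pm at hs' hr' ⊢
            omega
          have hch := chain_up q (1+η) hη0' N₁ hup (Nt+m-s) s (by omega)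
          rw [show s + (Nt+m-s) = Nt+m by omega] at hch
          calc q s ≤ (1+η)^(Nt+m-s) * q (Nt+m) := hch
            _ ≤ (1+η)^(2*m*(p+1)+r) * q (Nt+m) := by
                apply mul_le_mul_of_nonneg_right _ (hq0 _)
                exact pow_le_pow_right₀ hη1 (le_trans hj hprod)
        · have hj : s-(Nt+m) ≤ p*m := by
            have hs' : s = Nt + p*m - r := hsdef
            have hr' : r ≤ Nt + p*m := hr
            generalize hg : p * m = pm at hs' hr' ⊢
            omega
          have hch := chain_down q (1+η) hη0' N₁ hdown (s-(Nt+m)) (Nt+m) (by omega)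
          rw [show (Nt+m) + (s-(Nt+m)) = s by omega] at hch
          calc q s ≤ (1+η)^(s-(Nt+m)) * q (Nt+m) := hch
            _ ≤ (1+η)^(2*m*(p+1)+r) * q (Nt+m) := by
                apply mul_le_mul_of_nonneg_right _ (hq0 _)
                exact pow_le_pow_right₀ hη1 (le_trans hj hprod2)
      have hsplit2 : (1+η)^(2*m*(p+1)+r) ≤ (1+ε/4)^(p+1) * (1+ε/4)^r := by
        rw [pow_add, mul_comm 2 m, mul_assoc, pow_mul]
        apply mul_le_mul
        · have e1 : ((1+η)^m)^(2*(p+1)) = ((1+η)^(2*m))^(p+1) := by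
            rw [← pow_mul, ← pow_mul]
            congr 1
            ring
          rw [e1]
          exact pow_le_pow_left₀ (by positivity) hη2m (p+1)
        · exact pow_le_pow_left₀ hη0' (by linarith) r
        · positivity
        · positivity
      calc convPow q p s ≤ A₁ * (1+ε)^p * q s := hKb
        _ ≤ A₁ * (1+ε)^p * ((1+η)^(2*m*(p+1)+r) * q (Nt+m)) :=
            mul_le_mul_of_nonneg_left hchain (by positivity)
        _ ≤ A₁ * (1+ε)^p * ((1+ε/4)^(p+1) * (1+ε/4)^r * q (Nt+m)) := by
            apply mul_le_mul_of_nonneg_left _ (by positivity)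
            exact mul_le_mul_of_nonneg_right hsplit2 (hq0 _)
        _ = (A₁ * (1+ε/4)) * (((1+ε)*(1+ε/4))^p * ((1+ε/4)^r * q (Nt+m))) := by
            rw [mul_pow, pow_succ]; ring
        _ ≤ A * ((1+δ)^p * ((1+δ)^r * q (Nt+m))) := by
            apply mul_le_mul hA2 _ (by positivity) hApos.le
            apply mul_le_mul (pow_le_pow_left₀ (by positivity) hεδmain p) _ (by positivity)
              (by positivity)
            exact mul_le_mul_of_nonneg_right (pow_le_pow_left₀ (by positivity) hεδ2 r) (hq0 _)
        _ = A * (1+δ)^(p+r) * q (Nt+m) := by rw [pow_add]; ring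
    · -- small case
      have hD1 : convPow q p s ≤ 1 := convPow_le_one hq0 hs1 p s
      have hrge : Nt - n₀ ≤ r := by
        have hs' : s = Nt + p*m - r := hsdef
        have hr' : r ≤ Nt + p*m := hr
        have hc' : ¬ (n₀ ≤ s) := hcase
        generalize hg : p * m = pm at hs' hr' ⊢
        omega
      have h1 : 1 ≤ (1+δ)^(Nt-n₀) * q (Nt+m) := hsmall Nt (by omega)
      have h2 : (1+δ)^(Nt-n₀) ≤ (1+δ)^(p+r) := pow_le_pow_right₀ (by linarith) (by omega)
      calc convPow q p s ≤ 1 := hD1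
        _ ≤ (1+δ)^(Nt-n₀) * q (Nt+m) := h1
        _ ≤ (1+δ)^(p+r) * q (Nt+m) := mul_le_mul_of_nonneg_right h2 (hq0 _)
        _ = 1 * ((1+δ)^(p+r) * q (Nt+m)) := by ring
        _ ≤ A * (1+δ)^(p+r) * q (Nt+m) := by
            rw [← mul_assoc]
            apply mul_le_mul_of_nonneg_right _ (hq0 _)
            apply mul_le_mul_of_nonneg_right hA1 (by positivity)
  · have hE : {ω | ∑ i ∈ Finset.range p, ((X i ω : ℤ) - (m:ℤ)) = (Nt:ℤ) - (r:ℤ)}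
        = ∅ := by
      ext ω
      simp only [Set.mem_setOf_eq, Set.mem_empty_iff_false, iff_false]
      rw [Finset.sum_sub_distrib, Finset.sum_const, Finset.card_range, nsmul_eq_mul,
        show ((p:ℤ) * (m:ℤ)) = ((p*m : ℕ) : ℤ) by push_cast; ring, ← Nat.cast_sum]
      have hr' : ¬ (r ≤ Nt + p*m) := hr
      generalize hg : p * m = pm at hr' ⊢
      omega
    rw [hE]
    simp only [measure_empty, ENNReal.toReal_zero]
    exact mul_nonneg (mul_nonneg hApos.le (by positivity)) (hq0 _)
end
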